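/- arXiv:1104.4692 — 3 statements merged into one kernel-verified Lean document; each statement's English description precedes it below -/
import Mathlib

section
/- Let d ≥ 2 and let X be any finite subset of Ω(d). Then for every (k,l) ∈ ℕ×ℕ, the sum Σ_{a,b∈X} g_{k,l}(a^*b) is a nonnegative real number. -/
open Finset

/-- The Hermitian inner product `x^* y = ∑ i, conj (x i) * y i` on `ℂ^d`. -/
noncomputable def cInner {d : ℕ} (x y : Fin d → ℂ) : ℂ :=
  ∑ i, (starRingEnd ℂ) (x i) * y i

/-- A lower set in `ℕ × ℕ` with respect to the product order. -/
def IsLowerSet' (T : Finset (ℕ × ℕ)) : Prop :=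
  ∀ kl ∈ T, ∀ mn : ℕ × ℕ, mn.1 ≤ kl.1 → mn.2 ≤ kl.2 → mn ∈ T

/-- The average over the unit sphere `Ω(d)` of the monomial
`z ↦ ∏ i, z i ^ a i * conj (z i) ^ b i`. -/
noncomputable def monomialAvg (d : ℕ) (a b : Fin d → ℕ) : ℂ :=
  if a = b then
    ((Nat.factorial (d - 1) : ℂ) * ∏ i, (Nat.factorial (a i) : ℂ)) /
      (Nat.factorial (d + (∑ i, a i) - 1) : ℂ)
  else 0

/-- `X` is a complex spherical `T`-design: every monomial of bidegree `(k,l) ∈ T`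
has the same average over `X` as over the sphere `Ω(d)`. -/
def IsDesign (d : ℕ) (X : Finset (Fin d → ℂ)) (T : Finset (ℕ × ℕ)) : Prop :=
  ∀ kl ∈ T, ∀ a b : Fin d → ℕ, (∑ i, a i) = kl.1 → (∑ i, b i) = kl.2 →
    (∑ z ∈ X, (∏ i, (z i) ^ (a i)) * ∏ i, ((starRingEnd ℂ) (z i)) ^ (b i))
      = (X.card : ℂ) * monomialAvg d a b

/-- The Jacobi polynomial `g_{k,l}` for the complex sphere in dimension `d`. -/
noncomputable def jacobi (d k l : ℕ) (x : ℂ) : ℂ :=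
  (((d + k + l - 1 : ℕ) : ℂ) / (Nat.factorial (d - 1) : ℂ)) *
    ∑ r ∈ Finset.range (min k l + 1),
      (((-1 : ℂ) ^ r * (Nat.factorial (d + k + l - r - 2) : ℂ)) /
          ((Nat.factorial r : ℂ) * (Nat.factorial (k - r) : ℂ) *
            (Nat.factorial (l - r) : ℂ))) *
        x ^ (k - r) * ((starRingEnd ℂ) x) ^ (l - r)

open scoped Classical in
/-- The inner product set `A(X) = {x^* y : x, y ∈ X, x ≠ y}`. -/
noncomputable def innerSet {d : ℕ} (X : Finset (Fin d → ℂ)) : Finset ℂ :=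
  ((X ×ˢ X).filter fun p => p.1 ≠ p.2).image fun p => cInner p.1 p.2

/-- `m_{k,l}`, the dimension of the harmonic space `Harm(k,l)` in dimension `d`. -/
def mdim (d k l : ℕ) : ℕ :=
  (d + k - 1).choose (d - 1) * (d + l - 1).choose (d - 1) -
    (d + k - 2).choose (d - 1) * (d + l - 2).choose (d - 1)

/-- The convolution `U * V = {(k + l', k' + l) : (k,l) ∈ U, (k',l') ∈ V}`. -/
def convSet (U V : Finset (ℕ × ℕ)) : Finset (ℕ × ℕ) :=
  (U ×ˢ V).image fun p => (p.1.1 + p.2.2, p.2.1 + p.1.2)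

/-- `X` is an `S`-code: it has an annihilator polynomial supported on monomials
`x^k * conj x^l` with `(k,l) ∈ S`. -/
def IsCode (d : ℕ) (X : Finset (Fin d → ℂ)) (S : Finset (ℕ × ℕ)) : Prop :=
  ∃ c : ℕ × ℕ → ℝ,
    (∀ α ∈ innerSet X, ∑ kl ∈ S, (c kl : ℂ) * α ^ kl.1 * ((starRingEnd ℂ) α) ^ kl.2 = 0) ∧
    0 < ∑ kl ∈ S, c kl

open Finset MvPolynomial
open scoped Classical

noncomputable section

namespace S9

variable {d : ℕ}

abbrev PP (d : ℕ) := MvPolynomial (Fin d ⊕ Fin d) ℂ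

lemma cInner_conj {d : ℕ} (x y : Fin d → ℂ) :
    (starRingEnd ℂ) (cInner x y) = cInner y x := by
  rw [cInner, map_sum, cInner]
  refine Finset.sum_congr rfl fun i _ => ?_
  rw [map_mul, Complex.conj_conj]
  ring

def wN (m : (Fin d ⊕ Fin d) →₀ ℕ) : ℕ := ∏ j, (m j).factorial

def FP (f h : PP d) : ℂ :=
  ∑ m ∈ f.support, (wN m : ℂ) * (starRingEnd ℂ) (coeff m f) * coeff m h

lemma FP_eq_sum_of_subset {f h : PP d} {M : Finset ((Fin d ⊕ Fin d) →₀ ℕ)}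
    (hM : f.support ⊆ M) :
    FP f h = ∑ m ∈ M, (wN m : ℂ) * (starRingEnd ℂ) (coeff m f) * coeff m h := by
  refine Finset.sum_subset hM ?_
  intro m _ hm
  rw [MvPolynomial.notMem_support_iff] at hm
  simp [hm]

lemma FP_add_left {f g h : PP d} : FP (f + g) h = FP f h + FP g h := by
  rw [FP_eq_sum_of_subset (M := f.support ∪ g.support) (MvPolynomial.support_add),
    FP_eq_sum_of_subset (M := f.support ∪ g.support) Finset.subset_union_left,
    FP_eq_sum_of_subset (M := f.support ∪ g.support) Finset.subset_union_right,
    ← Finset.sum_add_distrib]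
  refine Finset.sum_congr rfl fun m _ => ?_
  simp [coeff_add, map_add]; ring

lemma FP_zero_left {h : PP d} : FP 0 h = 0 := by simp [FP]

lemma FP_sum_left {ι : Type*} {s : Finset ι} {f : ι → PP d} {h : PP d} :
    FP (∑ i ∈ s, f i) h = ∑ i ∈ s, FP (f i) h := by
  induction s using Finset.cons_induction with
  | empty => simp [FP_zero_left]
  | cons i s hi ih => rw [Finset.sum_cons, FP_add_left, ih, Finset.sum_cons]

lemma FP_Cmul_left {z : ℂ} {f h : PP d} :
    FP (C z * f) h = (starRingEnd ℂ) z * FP f h := by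
  have hs : (C z * f).support ⊆ f.support := by
    intro m hm
    rw [MvPolynomial.mem_support_iff] at hm ⊢
    intro h0; rw [coeff_C_mul, h0, mul_zero] at hm; exact hm rfl
  rw [FP_eq_sum_of_subset (M := f.support) hs, FP, Finset.mul_sum]
  refine Finset.sum_congr rfl fun m _ => ?_
  rw [coeff_C_mul, map_mul]; ring

lemma FP_monomial_left {m : (Fin d ⊕ Fin d) →₀ ℕ} {c : ℂ} {h : PP d} :
    FP (monomial m c) h = (wN m : ℂ) * (starRingEnd ℂ) c * coeff m h := by
  have hs : (monomial m c).support ⊆ {m} := MvPolynomial.support_monomial_subset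
  rw [FP_eq_sum_of_subset (M := {m}) hs, Finset.sum_singleton, coeff_monomial]
  simp

lemma FP_right_add {f h h' : PP d} : FP f (h + h') = FP f h + FP f h' := by
  simp [FP, coeff_add, mul_add, Finset.sum_add_distrib]

lemma FP_right_zero {f : PP d} : FP f 0 = 0 := by simp [FP]

lemma FP_right_sum {ι : Type*} {s : Finset ι} {f : PP d} {h : ι → PP d} :
    FP f (∑ i ∈ s, h i) = ∑ i ∈ s, FP f (h i) := by
  induction s using Finset.cons_induction with
  | empty => simp [FP_right_zero]
  | cons i s hi ih => rw [Finset.sum_cons, FP_right_add, ih, Finset.sum_cons]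

lemma FP_right_Cmul {z : ℂ} {f h : PP d} : FP f (C z * h) = z * FP f h := by
  simp [FP, coeff_C_mul, Finset.mul_sum]; refine Finset.sum_congr rfl fun m _ => ?_; ring

lemma FP_one_left {h : PP d} : FP 1 h = constantCoeff h := by
  have : (1 : PP d) = monomial 0 1 := by simp [MvPolynomial.monomial_zero']
  rw [this, FP_monomial_left]
  simp [wN, MvPolynomial.constantCoeff_eq]

lemma wN_add_single {m : (Fin d ⊕ Fin d) →₀ ℕ} {i : Fin d ⊕ Fin d} :
    wN (m + Finsupp.single i 1) = wN m * (m i + 1) := by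
  unfold wN
  rw [← Finset.mul_prod_erase univ _ (mem_univ i),
    ← Finset.mul_prod_erase univ (fun j => (m j).factorial) (mem_univ i)]
  have h1 : ∀ j ∈ univ.erase i,
      (((m + Finsupp.single i 1) : (Fin d ⊕ Fin d) →₀ ℕ) j).factorial = (m j).factorial := by
    intro j hj
    have hne : j ≠ i := (Finset.mem_erase.mp hj).1
    simp [Finsupp.add_apply, Finsupp.single_apply, (Ne.symm hne : i ≠ j)]
  rw [Finset.prod_congr rfl h1]
  simp [Finsupp.add_apply, Finsupp.single_eq_same, Nat.factorial_succ]
  ring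


lemma coeff_pderiv {i : Fin d ⊕ Fin d} {m : (Fin d ⊕ Fin d) →₀ ℕ} {h : PP d} :
    coeff m (pderiv i h) = (m i + 1) * coeff (m + Finsupp.single i 1) h := by
  induction h using MvPolynomial.induction_on' with
  | add p q hp hq => simp [map_add, coeff_add, hp, hq, mul_add]
  | monomial s a =>
    rw [pderiv_monomial, coeff_monomial, coeff_monomial]
    by_cases he : s = m + Finsupp.single i 1
    · have h1 : s - Finsupp.single i 1 = m := by
        ext j
        have := DFunLike.congr_fun he j
        rw [Finsupp.tsub_apply]
        simp only [Finsupp.add_apply] at this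
        omega
      have h2 : s i = m i + 1 := by
        have := DFunLike.congr_fun he i
        simp only [Finsupp.add_apply, Finsupp.single_eq_same] at this
        omega
      rw [if_pos h1, if_pos he, h2]; push_cast; ring
    · rw [if_neg he]
      by_cases hs : s - Finsupp.single i 1 = m
      · have hsi : s i = 0 := by
          by_contra hne
          apply he
          ext j
          have := DFunLike.congr_fun hs j
          rw [Finsupp.tsub_apply] at this
          simp only [Finsupp.add_apply]
          by_cases hji : j = i
          · subst hji
            simp only [Finsupp.single_eq_same] at this ⊢
            omega
          · simp only [Finsupp.single_apply, if_neg (Ne.symm hji)] at this ⊢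
            omega
        rw [if_pos hs, hsi]; ring
      · rw [if_neg hs]; ring

lemma FP_X_mul {i : Fin d ⊕ Fin d} {f h : PP d} :
    FP (X i * f) h = FP f (pderiv i h) := by
  induction f using MvPolynomial.induction_on' with
  | add p q hp hq => rw [mul_add, FP_add_left, FP_add_left, hp, hq]
  | monomial s a =>
    have hx : (X i : PP d) * monomial s a = monomial (s + Finsupp.single i 1) a := by
      rw [MvPolynomial.X, monomial_mul, one_mul, add_comm]
    rw [hx, FP_monomial_left, FP_monomial_left, coeff_pderiv, wN_add_single]
    push_cast; ring

lemma pderiv_pderiv_comm {i j : Fin d ⊕ Fin d} {f : PP d} :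
    pderiv i (pderiv j f) = pderiv j (pderiv i f) := by
  by_cases hij : i = j
  · subst hij; rfl
  · induction f using MvPolynomial.induction_on' with
    | add p q hp hq => simp [map_add, hp, hq]
    | monomial s a =>
      rw [pderiv_monomial, pderiv_monomial, pderiv_monomial, pderiv_monomial]
      have h1 : s - Finsupp.single j 1 - Finsupp.single i 1
          = s - Finsupp.single i 1 - Finsupp.single j 1 := by
        ext x
        rw [Finsupp.tsub_apply, Finsupp.tsub_apply, Finsupp.tsub_apply, Finsupp.tsub_apply]
        omega
      have h2 : ((s - Finsupp.single j 1 : (Fin d ⊕ Fin d) →₀ ℕ)) i = s i := by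
        rw [Finsupp.tsub_apply, Finsupp.single_apply, if_neg (Ne.symm hij)]
        omega
      have h3 : ((s - Finsupp.single i 1 : (Fin d ⊕ Fin d) →₀ ℕ)) j = s j := by
        rw [Finsupp.tsub_apply, Finsupp.single_apply, if_neg hij]
        omega
      rw [h1, h2, h3]; ring_nf

/-- generic peeling -/
lemma FP_pow_mul {x : PP d} {T : PP d → PP d}
    (hT : ∀ g h, FP (x * g) h = FP g (T h)) :
    ∀ (m : ℕ) (g h : PP d), FP (x ^ m * g) h = FP g (T^[m] h) := by
  intro m
  induction m with
  | zero => intro g h; simp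
  | succ m ih =>
    intro g h
    rw [pow_succ, mul_comm (x ^ m) x, mul_assoc, hT, ih, Function.iterate_succ_apply]


/-! ### Generators and derivative operators -/

def uu (b : Fin d → ℂ) : PP d := ∑ i, C ((starRingEnd ℂ) (b i)) * X (Sum.inl i)
def vv (b : Fin d → ℂ) : PP d := ∑ i, C (b i) * X (Sum.inr i)
def ss : PP d := ∑ i, X (Sum.inl i) * X (Sum.inr i)

def Dg (c : Fin d → ℂ) (sd : Fin d → (Fin d ⊕ Fin d)) (h : PP d) : PP d :=
  ∑ i, C (c i) * pderiv (sd i) h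

def DA (a : Fin d → ℂ) : PP d → PP d := Dg a Sum.inl
def DB (a : Fin d → ℂ) : PP d → PP d := Dg (fun i => (starRingEnd ℂ) (a i)) Sum.inr
def DEL : PP d → PP d := fun h => ∑ i, pderiv (Sum.inr i) (pderiv (Sum.inl i) h)

variable {c a b : Fin d → ℂ} {sd : Fin d → (Fin d ⊕ Fin d)}

lemma pderiv_uu_inl {i : Fin d} : pderiv (Sum.inl i) (uu b) = C ((starRingEnd ℂ) (b i)) := by
  unfold uu
  rw [map_sum, Finset.sum_eq_single i]
  · rw [pderiv_C_mul, pderiv_X_self, mul_one]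
  · intro j _ hj
    rw [pderiv_C_mul, pderiv_X_of_ne (fun hh => hj (Sum.inl.inj hh)), mul_zero]
  · intro h; exact absurd (mem_univ i) h

lemma pderiv_uu_inr {i : Fin d} : pderiv (Sum.inr i) (uu b) = 0 := by
  unfold uu
  rw [map_sum, Finset.sum_eq_zero]
  intro j _
  rw [pderiv_C_mul, pderiv_X_of_ne (by simp), mul_zero]

lemma pderiv_vv_inr {i : Fin d} : pderiv (Sum.inr i) (vv b) = C (b i) := by
  unfold vv
  rw [map_sum, Finset.sum_eq_single i]
  · rw [pderiv_C_mul, pderiv_X_self, mul_one]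
  · intro j _ hj
    rw [pderiv_C_mul, pderiv_X_of_ne (fun hh => hj (Sum.inr.inj hh)), mul_zero]
  · intro h; exact absurd (mem_univ i) h

lemma pderiv_vv_inl {i : Fin d} : pderiv (Sum.inl i) (vv b) = 0 := by
  unfold vv
  rw [map_sum, Finset.sum_eq_zero]
  intro j _
  rw [pderiv_C_mul, pderiv_X_of_ne (by simp), mul_zero]

lemma pderiv_ss_inl {i : Fin d} : pderiv (Sum.inl i) (ss : PP d) = X (Sum.inr i) := by
  unfold ss
  rw [map_sum, Finset.sum_eq_single i]
  · rw [pderiv_mul, pderiv_X_self, pderiv_X_of_ne (by simp), one_mul, mul_zero, add_zero]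
  · intro j _ hj
    rw [pderiv_mul, pderiv_X_of_ne (fun hh => hj (Sum.inl.inj hh)),
      pderiv_X_of_ne (by simp), zero_mul, mul_zero, add_zero]
  · intro h; exact absurd (mem_univ i) h

lemma pderiv_ss_inr {i : Fin d} : pderiv (Sum.inr i) (ss : PP d) = X (Sum.inl i) := by
  unfold ss
  rw [map_sum, Finset.sum_eq_single i]
  · rw [pderiv_mul, pderiv_X_self, pderiv_X_of_ne (by simp), mul_one, zero_mul, zero_add]
  · intro j _ hj
    rw [pderiv_mul, pderiv_X_of_ne (by simp),
      pderiv_X_of_ne (fun hh => hj (Sum.inr.inj hh)), zero_mul, mul_zero, add_zero]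
  · intro h; exact absurd (mem_univ i) h

/-! ### Dg structural lemmas -/

lemma Dg_add {f g : PP d} : Dg c sd (f + g) = Dg c sd f + Dg c sd g := by
  simp [Dg, map_add, mul_add, Finset.sum_add_distrib]

lemma Dg_zero : Dg c sd (0 : PP d) = 0 := by simp [Dg]

lemma Dg_Cmul {z : ℂ} {h : PP d} : Dg c sd (C z * h) = C z * Dg c sd h := by
  simp only [Dg, pderiv_C_mul, Finset.mul_sum]
  exact Finset.sum_congr rfl fun i _ => by ring

lemma Dg_mul {f g : PP d} :
    Dg c sd (f * g) = Dg c sd f * g + f * Dg c sd g := by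
  simp only [Dg, pderiv_mul, mul_add]
  rw [Finset.sum_add_distrib, Finset.sum_mul, Finset.mul_sum]
  congr 1
  · exact Finset.sum_congr rfl fun i _ => by ring
  · exact Finset.sum_congr rfl fun i _ => by ring

lemma Dg_pow {f : PP d} {n : ℕ} :
    Dg c sd (f ^ n) = (n : PP d) * f ^ (n - 1) * Dg c sd f := by
  simp only [Dg, pderiv_pow, Finset.mul_sum]
  exact Finset.sum_congr rfl fun i _ => by ring

lemma Dg_one : Dg c sd (1 : PP d) = 0 := by
  unfold Dg
  rw [Finset.sum_eq_zero]
  intro i _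
  rw [pderiv_one, mul_zero]

/-! ### values of DA, DB on generators -/

lemma DA_uu : DA a (uu b) = C ((starRingEnd ℂ) (cInner a b)) := by
  have h1 : ∀ i ∈ univ, C (a i) * pderiv (Sum.inl i) (uu b)
      = C (a i * (starRingEnd ℂ) (b i)) := fun i _ => by rw [pderiv_uu_inl, ← C_mul]
  unfold DA Dg
  rw [Finset.sum_congr rfl h1, ← map_sum]
  congr 1
  rw [cInner, map_sum]
  refine Finset.sum_congr rfl fun i _ => ?_
  simp

lemma DA_vv : DA a (vv b) = 0 := by
  simp [DA, Dg, pderiv_vv_inl]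

lemma DA_ss : DA a (ss : PP d) = vv a := by
  simp [DA, Dg, pderiv_ss_inl, vv]

lemma DB_vv : DB a (vv b) = C (cInner a b) := by
  have h1 : ∀ i ∈ univ, C ((starRingEnd ℂ) (a i)) * pderiv (Sum.inr i) (vv b)
      = C ((starRingEnd ℂ) (a i) * b i) := fun i _ => by rw [pderiv_vv_inr, ← C_mul]
  unfold DB Dg
  rw [Finset.sum_congr rfl h1, ← map_sum]
  rfl

lemma DB_uu : DB a (uu b) = 0 := by
  simp [DB, Dg, pderiv_uu_inr]

lemma DB_ss : DB a (ss : PP d) = uu a := by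
  simp [DB, Dg, pderiv_ss_inr, uu]

/-! ### commutation -/

lemma Dg_Dg_comm {c' : Fin d → ℂ} {sd' : Fin d → (Fin d ⊕ Fin d)} {h : PP d} :
    Dg c sd (Dg c' sd' h) = Dg c' sd' (Dg c sd h) := by
  simp only [Dg, map_sum, pderiv_C_mul, Finset.mul_sum]
  rw [Finset.sum_comm]
  refine Finset.sum_congr rfl fun i _ => Finset.sum_congr rfl fun j _ => ?_
  rw [pderiv_pderiv_comm]
  ring

/-! ### iterate helpers -/

lemma fun_sum {F : PP d → PP d} (h0 : F 0 = 0) (hadd : ∀ x y, F (x + y) = F x + F y)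
    {ι : Type*} (s : Finset ι) (g : ι → PP d) :
    F (∑ i ∈ s, g i) = ∑ i ∈ s, F (g i) := by
  induction s using Finset.cons_induction with
  | empty => simpa
  | cons i s hi ih => rw [Finset.sum_cons, hadd, ih, Finset.sum_cons]

lemma iter_zero {F : PP d → PP d} (h0 : F 0 = 0) (n : ℕ) : F^[n] 0 = 0 := by
  induction n with
  | zero => rfl
  | succ n ih => rw [Function.iterate_succ_apply, h0, ih]

lemma iter_add {F : PP d → PP d} (hadd : ∀ x y, F (x + y) = F x + F y) (n : ℕ) :
    ∀ x y, F^[n] (x + y) = F^[n] x + F^[n] y := by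
  induction n with
  | zero => intro x y; rfl
  | succ n ih =>
    intro x y
    simp only [Function.iterate_succ_apply]
    rw [hadd]
    exact ih _ _

lemma iter_Cmul {F : PP d → PP d} (hC : ∀ z h, F (C z * h) = C z * F h) (n : ℕ) :
    ∀ z h, F^[n] (C z * h) = C z * F^[n] h := by
  induction n with
  | zero => intro z h; rfl
  | succ n ih =>
    intro z h
    simp only [Function.iterate_succ_apply]
    rw [hC]
    exact ih _ _

lemma iter_sum {F : PP d → PP d} (h0 : F 0 = 0) (hadd : ∀ x y, F (x + y) = F x + F y)
    (n : ℕ) {ι : Type*} (s : Finset ι) (g : ι → PP d) :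
    F^[n] (∑ i ∈ s, g i) = ∑ i ∈ s, F^[n] (g i) :=
  fun_sum (iter_zero h0 n) (iter_add hadd n) s g

lemma Dg_iter_comm {c c' : Fin d → ℂ} {sd sd' : Fin d → Fin d ⊕ Fin d} (L : ℕ) :
    ∀ h : PP d, Dg c sd ((Dg c' sd')^[L] h) = (Dg c' sd')^[L] (Dg c sd h) := by
  induction L with
  | zero => intro h; rfl
  | succ L ih =>
    intro h
    rw [Function.iterate_succ_apply, Function.iterate_succ_apply, ih, Dg_Dg_comm]

lemma DA_DB_iter {a' : Fin d → ℂ} (L : ℕ) (h : PP d) :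
    DA a ((DB a')^[L] h) = (DB a')^[L] (DA a h) :=
  Dg_iter_comm L h


/-! ### DEL structure -/

lemma pderiv_nat {i : Fin d ⊕ Fin d} {n : ℕ} : pderiv i ((n : PP d)) = 0 := by
  rw [← map_natCast (C : ℂ →+* PP d) n, pderiv_C]

lemma DEL_add {f g : PP d} : DEL (f + g) = DEL f + DEL g := by
  simp [DEL, map_add, Finset.sum_add_distrib]

lemma DEL_zero : DEL (0 : PP d) = 0 := by simp [DEL]

lemma DEL_Cmul {z : ℂ} {h : PP d} : DEL (C z * h) = C z * DEL h := by
  simp only [DEL, pderiv_C_mul, Finset.mul_sum]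

lemma DELterm_i {m n r : ℕ} {i : Fin d} :
    pderiv (Sum.inr i) (pderiv (Sum.inl i) (uu b ^ m * vv b ^ n * ss ^ r)) =
      C ((starRingEnd ℂ) (b i)) * C (b i) *
        ((m : PP d) * (n : PP d) * (uu b ^ (m-1) * vv b ^ (n-1) * ss ^ r))
      + C ((starRingEnd ℂ) (b i)) * X (Sum.inl i) *
        ((m : PP d) * (r : PP d) * (uu b ^ (m-1) * vv b ^ n * ss ^ (r-1)))
      + C (b i) * X (Sum.inr i) *
        ((n : PP d) * (r : PP d) * (uu b ^ m * vv b ^ (n-1) * ss ^ (r-1)))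
      + X (Sum.inl i) * X (Sum.inr i) *
        ((r : PP d) * (((r-1 : ℕ)) : PP d) * (uu b ^ m * vv b ^ n * ss ^ (r-1-1)))
      + (r : PP d) * (uu b ^ m * vv b ^ n * ss ^ (r-1)) := by
  simp only [map_add, pderiv_mul, pderiv_pow, pderiv_uu_inl, pderiv_uu_inr, pderiv_vv_inl,
    pderiv_vv_inr, pderiv_ss_inl, pderiv_ss_inr, pderiv_nat, pderiv_C, pderiv_X_self,
    zero_mul, mul_zero, add_zero, zero_add]
  ring

lemma sum5 (hb : cInner b b = 1) (R1 R2 R3 R4 R5 : PP d) :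
    (∑ i, (C ((starRingEnd ℂ) (b i)) * C (b i) * R1
      + C ((starRingEnd ℂ) (b i)) * X (Sum.inl i) * R2
      + C (b i) * X (Sum.inr i) * R3
      + X (Sum.inl i) * X (Sum.inr i) * R4
      + R5))
    = R1 + uu b * R2 + vv b * R3 + ss * R4 + (d : PP d) * R5 := by
  rw [Finset.sum_add_distrib, Finset.sum_add_distrib, Finset.sum_add_distrib,
    Finset.sum_add_distrib]
  have h1 : (∑ i, C ((starRingEnd ℂ) (b i)) * C (b i) * R1) = R1 := by
    rw [← Finset.sum_mul]
    have : (∑ i, C ((starRingEnd ℂ) (b i)) * C (b i)) = (C (cInner b b) : PP d) := by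
      rw [cInner, map_sum]
      exact Finset.sum_congr rfl fun i _ => by rw [← C_mul]
    rw [this, hb, map_one, one_mul]
  have h2 : (∑ i, C ((starRingEnd ℂ) (b i)) * X (Sum.inl i) * R2) = uu b * R2 := by
    rw [← Finset.sum_mul, uu]
  have h3 : (∑ i, C (b i) * X (Sum.inr i) * R3) = vv b * R3 := by
    rw [← Finset.sum_mul, vv]
  have h4 : (∑ i, X (Sum.inl i) * X (Sum.inr i) * R4) = ss * R4 := by
    rw [← Finset.sum_mul, ss]
  have h5 : (∑ _i : Fin d, R5) = (d : PP d) * R5 := by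
    rw [Finset.sum_const, Finset.card_univ, Fintype.card_fin, nsmul_eq_mul]
  rw [h1, h2, h3, h4, h5]

lemma DEL_term (hb : cInner b b = 1) (m n r : ℕ) :
    DEL (uu b ^ m * vv b ^ n * ss ^ r) =
      C ((m:ℂ) * (n:ℂ)) * (uu b ^ (m-1) * vv b ^ (n-1) * ss ^ r)
      + C ((r:ℂ) * ((d:ℂ) + m + n + r - 1)) * (uu b ^ m * vv b ^ n * ss ^ (r-1)) := by
  unfold DEL
  rw [Finset.sum_congr rfl (fun i _ => DELterm_i (m := m) (n := n) (r := r) (i := i)),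
    sum5 hb]
  rcases r with _|_|r <;> rcases m with _|m <;> rcases n with _|n <;>
    · simp only [Nat.add_sub_cancel, Nat.zero_sub, Nat.sub_zero, pow_zero, Nat.cast_zero,
        map_mul, map_add, map_sub, map_natCast, map_one, map_zero, zero_mul, mul_zero]
      push_cast
      ring


/-! ### the Jacobi coefficients and the harmonic polynomial -/

def ccf (d k l r : ℕ) : ℂ :=
  ((-1 : ℂ) ^ r * ((d + k + l - r - 2).factorial : ℂ)) /
    ((r.factorial : ℂ) * ((k - r).factorial : ℂ) * ((l - r).factorial : ℂ))

def Zb (d k l : ℕ) (b : Fin d → ℂ) : PP d :=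
  ∑ r ∈ Finset.range (min k l + 1),
    C (ccf d k l r) * (uu b ^ (k - r) * vv b ^ (l - r) * ss ^ r)

lemma fact_ne {n : ℕ} : ((n.factorial : ℂ)) ≠ 0 :=
  Nat.cast_ne_zero.mpr n.factorial_pos.ne'

lemma ccf_rec {d k l r : ℕ} (hd : 2 ≤ d) (hrk : r + 1 ≤ k) (hrl : r + 1 ≤ l) :
    ccf d k l r * (((k : ℂ) - r) * ((l : ℂ) - r))
      + ccf d k l (r + 1) * (((r : ℂ) + 1) * ((d : ℂ) + k + l - r - 2)) = 0 := by
  obtain ⟨K, hK⟩ : ∃ K, k - r = K + 1 := ⟨k - r - 1, by omega⟩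
  obtain ⟨L2, hL⟩ : ∃ L2, l - r = L2 + 1 := ⟨l - r - 1, by omega⟩
  obtain ⟨E, hE⟩ : ∃ E, d + k + l - r - 2 = E + 1 := ⟨d + k + l - r - 3, by omega⟩
  have hk1 : k - (r + 1) = K := by omega
  have hl1 : l - (r + 1) = L2 := by omega
  have hE1 : d + k + l - (r + 1) - 2 = E := by omega
  have hkc : (k : ℂ) - r = (K : ℂ) + 1 := by
    have hh : ((k : ℕ) : ℂ) = ((r + K + 1 : ℕ) : ℂ) := by norm_cast; omega
    push_cast at hh; linear_combination hh
  have hlc : (l : ℂ) - r = (L2 : ℂ) + 1 := by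
    have hh : ((l : ℕ) : ℂ) = ((r + L2 + 1 : ℕ) : ℂ) := by norm_cast; omega
    push_cast at hh; linear_combination hh
  have hEc : (d : ℂ) + k + l - r - 2 = (E : ℂ) + 1 := by
    have hh : ((d + k + l : ℕ) : ℂ) = ((E + r + 3 : ℕ) : ℂ) := by norm_cast; omega
    push_cast at hh; linear_combination hh
  unfold ccf
  rw [hK, hL, hE, hk1, hl1, hE1, hkc, hlc, hEc,
    Nat.factorial_succ K, Nat.factorial_succ L2, Nat.factorial_succ E, Nat.factorial_succ r,
    pow_succ]
  push_cast
  have n1 : ((r.factorial : ℂ)) ≠ 0 := fact_ne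
  have n2 : ((K.factorial : ℂ)) ≠ 0 := fact_ne
  have n3 : ((L2.factorial : ℂ)) ≠ 0 := fact_ne
  have n4 : ((K : ℂ) + 1) ≠ 0 := by
    intro h; have := Nat.cast_add_one_ne_zero (R := ℂ) K; exact this h
  have n5 : ((L2 : ℂ) + 1) ≠ 0 := by
    intro h; have := Nat.cast_add_one_ne_zero (R := ℂ) L2; exact this h
  have n6 : ((r : ℂ) + 1) ≠ 0 := by
    intro h; have := Nat.cast_add_one_ne_zero (R := ℂ) r; exact this h
  field_simp
  ring

lemma DEL_Zb {k l : ℕ} (hd : 2 ≤ d) (hb : cInner b b = 1) : DEL (Zb d k l b) = 0 := by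
  unfold Zb
  rw [fun_sum DEL_zero (fun x y => DEL_add) _ _]
  have hterm : ∀ r,
      DEL (C (ccf d k l r) * (uu b ^ (k - r) * vv b ^ (l - r) * ss ^ r))
      = C (ccf d k l r * (((k - r : ℕ) : ℂ) * ((l - r : ℕ) : ℂ)))
          * (uu b ^ (k - r - 1) * vv b ^ (l - r - 1) * ss ^ r)
        + C (ccf d k l r * ((r : ℂ) * ((d : ℂ) + ((k - r : ℕ) : ℂ) + ((l - r : ℕ) : ℂ) + r - 1)))
          * (uu b ^ (k - r) * vv b ^ (l - r) * ss ^ (r - 1)) := by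
    intro r
    rw [DEL_Cmul, DEL_term hb (k - r) (l - r) r, mul_add]
    simp only [map_mul, map_add, map_sub, map_natCast, map_one]
    ring
  rw [Finset.sum_congr rfl (fun r _ => hterm r), Finset.sum_add_distrib]
  set F : ℕ → PP d := fun r => C (ccf d k l r * (((k - r : ℕ) : ℂ) * ((l - r : ℕ) : ℂ)))
      * (uu b ^ (k - r - 1) * vv b ^ (l - r - 1) * ss ^ r) with hF
  set G : ℕ → PP d := fun r => C (ccf d k l r
        * ((r : ℂ) * ((d : ℂ) + ((k - r : ℕ) : ℂ) + ((l - r : ℕ) : ℂ) + r - 1)))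
      * (uu b ^ (k - r) * vv b ^ (l - r) * ss ^ (r - 1)) with hG
  rw [Finset.sum_range_succ F (min k l), Finset.sum_range_succ' G (min k l)]
  have htop : F (min k l) = 0 := by
    have h0 : ((k - min k l : ℕ) : ℂ) * ((l - min k l : ℕ) : ℂ) = 0 := by
      rcases Nat.le_total k l with h | h
      · rw [Nat.min_eq_left h]; simp
      · rw [Nat.min_eq_right h]; simp
    rw [hF]
    simp only [h0, mul_zero, map_zero, zero_mul]
  have hzero : G 0 = 0 := by
    rw [hG]
    simp only [Nat.cast_zero, zero_mul, mul_zero, map_zero]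
  rw [htop, hzero, add_zero, add_zero, ← Finset.sum_add_distrib]
  refine Finset.sum_eq_zero fun r hr => ?_
  have hrm : r < min k l := Finset.mem_range.mp hr
  have hrk : r + 1 ≤ k := by omega
  have hrl : r + 1 ≤ l := by omega
  rw [hF, hG]
  simp only []
  have hmono : uu b ^ (k - (r + 1)) * vv b ^ (l - (r + 1)) * ss ^ (r + 1 - 1)
      = uu b ^ (k - r - 1) * vv b ^ (l - r - 1) * ss ^ r := by
    rw [Nat.sub_sub, Nat.sub_sub, Nat.add_sub_cancel]
  rw [hmono, ← add_mul, ← map_add]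
  have hsc : ccf d k l r * (((k - r : ℕ) : ℂ) * ((l - r : ℕ) : ℂ))
      + ccf d k l (r + 1) * (((r + 1 : ℕ) : ℂ)
        * ((d : ℂ) + ((k - (r + 1) : ℕ) : ℂ) + ((l - (r + 1) : ℕ) : ℂ) + ((r + 1 : ℕ) : ℂ) - 1)) = 0 := by
    have e1 : ((k - r : ℕ) : ℂ) = (k : ℂ) - r := Nat.cast_sub (by omega)
    have e2 : ((l - r : ℕ) : ℂ) = (l : ℂ) - r := Nat.cast_sub (by omega)
    have e3 : ((k - (r + 1) : ℕ) : ℂ) = (k : ℂ) - r - 1 := by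
      rw [Nat.cast_sub hrk]; push_cast; ring
    have e4 : ((l - (r + 1) : ℕ) : ℂ) = (l : ℂ) - r - 1 := by
      rw [Nat.cast_sub hrl]; push_cast; ring
    rw [e1, e2, e3, e4]
    push_cast
    linear_combination ccf_rec hd hrk hrl
  rw [hsc, map_zero, zero_mul]


/-! ### constant coefficient computation -/

lemma DA_mul {f g : PP d} : DA a (f * g) = DA a f * g + f * DA a g := Dg_mul
lemma DA_pow {f : PP d} {n : ℕ} : DA a (f ^ n) = (n : PP d) * f ^ (n-1) * DA a f := Dg_pow
lemma DB_mul {f g : PP d} : DB a (f * g) = DB a f * g + f * DB a g := Dg_mul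
lemma DB_pow {f : PP d} {n : ℕ} : DB a (f ^ n) = (n : PP d) * f ^ (n-1) * DB a f := Dg_pow

lemma DA_add {f g : PP d} : DA a (f + g) = DA a f + DA a g := Dg_add
lemma DA_Cmul {z : ℂ} {h : PP d} : DA a (C z * h) = C z * DA a h := Dg_Cmul
lemma DA_zero : DA a (0 : PP d) = 0 := Dg_zero
lemma DB_add {f g : PP d} : DB a (f + g) = DB a f + DB a g := Dg_add
lemma DB_Cmul {z : ℂ} {h : PP d} : DB a (C z * h) = C z * DB a h := Dg_Cmul
lemma DB_zero : DB a (0 : PP d) = 0 := Dg_zero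

lemma CC_iter_Cmul {K L : ℕ} {z : ℂ} {h : PP d} :
    constantCoeff ((DA a)^[K] ((DB b)^[L] (C z * h)))
      = z * constantCoeff ((DA a)^[K] ((DB b)^[L] h)) := by
  rw [iter_Cmul (fun z h => DB_Cmul) L, iter_Cmul (fun z h => DA_Cmul) K]
  rw [map_mul, constantCoeff_C]

lemma CC_iter_add {K L : ℕ} {h h' : PP d} :
    constantCoeff ((DA a)^[K] ((DB b)^[L] (h + h')))
      = constantCoeff ((DA a)^[K] ((DB b)^[L] h))
        + constantCoeff ((DA a)^[K] ((DB b)^[L] h')) := by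
  rw [iter_add (fun x y => DB_add) L, iter_add (fun x y => DA_add) K, map_add]

/-- single `DB` step on the 2-block product -/
lemma DB_V2 (ha : cInner a a = 1) {n q : ℕ} :
    DB a (vv b ^ n * vv a ^ q)
      = C (cInner a b * n) * (vv b ^ (n-1) * vv a ^ q)
        + C ((q : ℂ)) * (vv b ^ n * vv a ^ (q-1)) := by
  have h1 : DB a (vv a) = (1 : PP d) := by rw [DB_vv, ha, map_one]
  simp only [DB_mul, DB_pow, DB_vv, h1, map_mul, map_natCast]
  ring

/-- single `DA` step on the 5-block product -/
lemma DA_T5 (ha : cInner a a = 1) {m n p q r : ℕ} :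
    DA a (uu b ^ m * vv b ^ n * uu a ^ p * vv a ^ q * ss ^ r)
      = C ((starRingEnd ℂ) (cInner a b) * m)
          * (uu b ^ (m-1) * vv b ^ n * uu a ^ p * vv a ^ q * ss ^ r)
        + C ((p : ℂ)) * (uu b ^ m * vv b ^ n * uu a ^ (p-1) * vv a ^ q * ss ^ r)
        + C ((r : ℂ)) * (uu b ^ m * vv b ^ n * uu a ^ p * vv a ^ (q+1) * ss ^ (r-1)) := by
  have h1 : DA a (uu a) = (1 : PP d) := by rw [DA_uu, ha, map_one, map_one]
  simp only [DA_mul, DA_pow, DA_uu, DA_vv, DA_ss, h1, map_mul, map_natCast,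
    mul_zero, zero_mul, add_zero, zero_add, mul_one]
  ring

/-- single `DB` step on the 5-block product -/
lemma DB_T5 (ha : cInner a a = 1) {m n p q r : ℕ} :
    DB a (uu b ^ m * vv b ^ n * uu a ^ p * vv a ^ q * ss ^ r)
      = C (cInner a b * n)
          * (uu b ^ m * vv b ^ (n-1) * uu a ^ p * vv a ^ q * ss ^ r)
        + C ((q : ℂ)) * (uu b ^ m * vv b ^ n * uu a ^ p * vv a ^ (q-1) * ss ^ r)
        + C ((r : ℂ)) * (uu b ^ m * vv b ^ n * uu a ^ (p+1) * vv a ^ q * ss ^ (r-1)) := by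
  have h1 : DB a (vv a) = (1 : PP d) := by rw [DB_vv, ha, map_one]
  simp only [DB_mul, DB_pow, DB_vv, DB_uu, DB_ss, h1, map_mul, map_natCast,
    mul_zero, zero_mul, add_zero, zero_add, mul_one]
  ring


lemma CC_base (ha : cInner a a = 1) :
    ∀ L n q, n + q = L →
      constantCoeff ((DB a)^[L] (vv b ^ n * vv a ^ q))
        = (L.factorial : ℂ) * (cInner a b) ^ n := by
  intro L
  induction L with
  | zero =>
    intro n q h
    obtain ⟨hn, hq⟩ : n = 0 ∧ q = 0 := by omega
    subst hn; subst hq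
    simp
  | succ L ih =>
    intro n q h
    rw [Function.iterate_succ_apply, DB_V2 ha,
      iter_add (fun x y => DB_add) L, map_add,
      iter_Cmul (fun z h => DB_Cmul) L, iter_Cmul (fun z h => DB_Cmul) L]
    simp only [map_mul, constantCoeff_C]
    rcases n with _|n
    · have hq : q = L + 1 := by omega
      subst hq
      simp only [Nat.cast_zero, mul_zero, zero_mul, zero_add, Nat.add_sub_cancel]
      rw [ih 0 L (by omega), Nat.factorial_succ]
      push_cast
      ring
    · rcases q with _|q
      · have hn : L = n := by omega
        subst hn
        simp only [Nat.cast_zero, mul_zero, zero_mul, add_zero, Nat.add_sub_cancel]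
        rw [ih L 0 (by omega), Nat.factorial_succ]
        push_cast
        ring
      · have hL : L = n + q + 1 := by omega
        subst hL
        simp only [Nat.add_sub_cancel]
        rw [ih n (q+1) (by omega), ih (n+1) q (by omega)]
        have hf : (((n + q + 1 + 1).factorial : ℂ))
            = ((n:ℂ) + q + 2) * ((n:ℂ) + q + 1) * (((n + q).factorial : ℂ)) := by
          rw [Nat.factorial_succ, Nat.factorial_succ]
          push_cast
          ring
        have hf2 : (((n + q + 1).factorial : ℂ))
            = ((n:ℂ) + q + 1) * (((n + q).factorial : ℂ)) := by
          rw [Nat.factorial_succ]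
          push_cast
          ring
        rw [hf, hf2]
        push_cast
        ring

lemma CC_main (ha : cInner a a = 1) :
    ∀ K m n p q r, m + p + r = K →
      constantCoeff ((DA a)^[K] ((DB a)^[n+q+r]
          (uu b ^ m * vv b ^ n * uu a ^ p * vv a ^ q * ss ^ r)))
        = (K.factorial : ℂ) * ((n+q+r).factorial : ℂ)
            * ((starRingEnd ℂ) (cInner a b)) ^ m * (cInner a b) ^ n := by
  intro K
  induction K with
  | zero =>
    intro m n p q r h
    obtain ⟨hm, hp, hr⟩ : m = 0 ∧ p = 0 ∧ r = 0 := by omega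
    subst hm; subst hp; subst hr
    rw [Function.iterate_zero_apply]
    have hT : uu b ^ 0 * vv b ^ n * uu a ^ 0 * vv a ^ q * ss ^ 0
        = vv b ^ n * vv a ^ q := by ring
    rw [hT, CC_base ha (n+q+0) n q (by omega)]
    simp
  | succ K ih =>
    intro m n p q r h
    rw [Function.iterate_succ_apply, DA_DB_iter, DA_T5 ha,
      CC_iter_add, CC_iter_add, CC_iter_Cmul, CC_iter_Cmul, CC_iter_Cmul]
    have t1 : (starRingEnd ℂ) (cInner a b) * ((m : ℂ)
          * constantCoeff ((DA a)^[K] ((DB a)^[n+q+r]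
            (uu b ^ (m-1) * vv b ^ n * uu a ^ p * vv a ^ q * ss ^ r))))
        = ((m : ℂ)) * ((K.factorial : ℂ) * ((n+q+r).factorial : ℂ)
            * ((starRingEnd ℂ) (cInner a b)) ^ m * (cInner a b) ^ n) := by
      rcases m with _|m'
      · simp
      · simp only [Nat.add_sub_cancel]
        rw [ih m' n p q r (by omega)]
        push_cast
        ring
    have t2 : ((p : ℂ)) * constantCoeff ((DA a)^[K] ((DB a)^[n+q+r]
          (uu b ^ m * vv b ^ n * uu a ^ (p-1) * vv a ^ q * ss ^ r)))
        = ((p : ℂ)) * ((K.factorial : ℂ) * ((n+q+r).factorial : ℂ)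
            * ((starRingEnd ℂ) (cInner a b)) ^ m * (cInner a b) ^ n) := by
      rcases p with _|p'
      · simp
      · simp only [Nat.add_sub_cancel]
        rw [ih m n p' q r (by omega)]
    have t3 : ((r : ℂ)) * constantCoeff ((DA a)^[K] ((DB a)^[n+q+r]
          (uu b ^ m * vv b ^ n * uu a ^ p * vv a ^ (q+1) * ss ^ (r-1))))
        = ((r : ℂ)) * ((K.factorial : ℂ) * ((n+q+r).factorial : ℂ)
            * ((starRingEnd ℂ) (cInner a b)) ^ m * (cInner a b) ^ n) := by
      rcases r with _|r'
      · simp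
      · have hcnt : n + q + (r' + 1) = n + (q + 1) + r' := by omega
        rw [hcnt]
        simp only [Nat.add_sub_cancel]
        rw [ih m n p (q+1) r' (by omega)]
    have hcast : (m : ℂ) + p + r = (K : ℂ) + 1 := by
      exact_mod_cast congrArg (fun x : ℕ => (x : ℂ)) h
    rw [Nat.factorial_succ]
    push_cast
    push_cast at t1 t2 t3
    linear_combination t1 + t2 + t3
      + ((K.factorial : ℂ) * ((n+q+r).factorial : ℂ)
          * ((starRingEnd ℂ) (cInner a b)) ^ m * (cInner a b) ^ n) * hcast


/-! ### peeling -/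

lemma FP_uu_mul {g h : PP d} : FP (uu a * g) h = FP g (DA a h) := by
  unfold DA Dg
  rw [uu, Finset.sum_mul, FP_sum_left, FP_right_sum]
  refine Finset.sum_congr rfl fun i _ => ?_
  rw [mul_assoc, FP_Cmul_left, FP_X_mul, FP_right_Cmul]
  simp

lemma FP_vv_mul {g h : PP d} : FP (vv a * g) h = FP g (DB a h) := by
  unfold DB Dg
  rw [vv, Finset.sum_mul, FP_sum_left, FP_right_sum]
  refine Finset.sum_congr rfl fun i _ => ?_
  rw [mul_assoc, FP_Cmul_left, FP_X_mul, FP_right_Cmul]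

lemma FP_ss_mul {g h : PP d} : FP (ss * g) h = FP g (DEL h) := by
  unfold DEL
  rw [ss, Finset.sum_mul, FP_sum_left, FP_right_sum]
  refine Finset.sum_congr rfl fun i _ => ?_
  rw [mul_assoc, FP_X_mul, FP_X_mul]

lemma FP_Zterm (m n r : ℕ) (h : PP d) :
    FP (ss ^ r * (vv a ^ n * (uu a ^ m * 1))) h
      = constantCoeff ((DA a)^[m] ((DB a)^[n] (DEL^[r] h))) := by
  rw [FP_pow_mul (fun g h => FP_ss_mul) r, FP_pow_mul (fun g h => FP_vv_mul) n,
    FP_pow_mul (fun g h => FP_uu_mul) m, FP_one_left]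

lemma ccf_real {k l r : ℕ} : (starRingEnd ℂ) (ccf d k l r) = ccf d k l r := by
  unfold ccf
  simp [map_div₀]

lemma CC_main' (ha : cInner a a = 1) {K L m n r : ℕ}
    (hK : m + r = K) (hL : n + r = L) :
    constantCoeff ((DA a)^[K] ((DB a)^[L] (uu b ^ m * vv b ^ n * ss ^ r)))
      = (K.factorial : ℂ) * (L.factorial : ℂ)
        * ((starRingEnd ℂ) (cInner a b)) ^ m * (cInner a b) ^ n := by
  have h5 : uu b ^ m * vv b ^ n * ss ^ r
      = uu b ^ m * vv b ^ n * uu a ^ 0 * vv a ^ 0 * ss ^ r := by ring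
  rw [h5]
  have hmain := CC_main (b := b) ha K m n 0 0 r (by omega)
  rw [show n + 0 + r = L from by omega] at hmain
  exact hmain

lemma CC_kl {k l : ℕ} (ha : cInner a a = 1) :
    constantCoeff ((DA a)^[k] ((DB a)^[l] (Zb d k l b)))
      = (k.factorial : ℂ) * (l.factorial : ℂ)
        * ∑ r ∈ Finset.range (min k l + 1),
            ccf d k l r * ((starRingEnd ℂ) (cInner a b)) ^ (k - r) * (cInner a b) ^ (l - r) := by
  unfold Zb
  rw [iter_sum DB_zero (fun x y => DB_add) l, iter_sum DA_zero (fun x y => DA_add) k, map_sum,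
    Finset.mul_sum]
  refine Finset.sum_congr rfl fun r hr => ?_
  have hrm : r ≤ min k l := Nat.lt_succ_iff.mp (Finset.mem_range.mp hr)
  have hrk : r ≤ k := le_trans hrm (min_le_left k l)
  have hrl : r ≤ l := le_trans hrm (min_le_right k l)
  rw [CC_iter_Cmul, CC_main' (K := k) (L := l) (m := k - r) (n := l - r) (r := r) ha (by omega) (by omega)]
  ring

lemma ccf_zero_fac {k l : ℕ} :
    ccf d k l 0 * (k.factorial : ℂ) * (l.factorial : ℂ)
      = (((d + k + l - 2).factorial : ℂ)) := by
  unfold ccf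
  simp only [pow_zero, Nat.sub_zero, Nat.factorial_zero, Nat.cast_one, one_mul]
  have h1 : ((k.factorial : ℂ)) ≠ 0 := fact_ne
  have h2 : ((l.factorial : ℂ)) ≠ 0 := fact_ne
  field_simp

lemma FP_ZZ {k l : ℕ} (hd : 2 ≤ d) (ha : cInner a a = 1) (hb : cInner b b = 1) :
    FP (Zb d k l a) (Zb d k l b)
      = ((d + k + l - 2).factorial : ℂ)
          * ∑ r ∈ Finset.range (min k l + 1),
              ccf d k l r * ((starRingEnd ℂ) (cInner a b)) ^ (k - r) * (cInner a b) ^ (l - r) := by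
  nth_rewrite 1 [Zb]
  rw [FP_sum_left]
  have hterm : ∀ r ∈ Finset.range (min k l + 1),
      FP (C (ccf d k l r) * (uu a ^ (k - r) * vv a ^ (l - r) * ss ^ r)) (Zb d k l b)
        = if r = 0 then ccf d k l 0
            * constantCoeff ((DA a)^[k] ((DB a)^[l] (Zb d k l b))) else 0 := by
    intro r hr
    rw [FP_Cmul_left, ccf_real]
    have hshape : uu a ^ (k - r) * vv a ^ (l - r) * ss ^ r
        = ss ^ r * (vv a ^ (l - r) * (uu a ^ (k - r) * 1)) := by ring
    rw [hshape, FP_Zterm]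
    rcases r with _|r'
    · rw [if_pos rfl]
      simp only [Nat.sub_zero, Function.iterate_zero_apply]
    · rw [if_neg (by omega)]
      rw [Function.iterate_succ_apply, DEL_Zb hd hb, iter_zero DEL_zero,
        iter_zero DB_zero, iter_zero DA_zero, map_zero, mul_zero]
  rw [Finset.sum_congr rfl hterm, Finset.sum_ite_eq' (Finset.range (min k l + 1)) 0
    (fun _ => ccf d k l 0 * constantCoeff ((DA a)^[k] ((DB a)^[l] (Zb d k l b))))]
  rw [if_pos (Finset.mem_range.mpr (by omega)), CC_kl ha]
  have h0 := ccf_zero_fac (d := d) (k := k) (l := l)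
  linear_combination (∑ r ∈ Finset.range (min k l + 1),
      ccf d k l r * ((starRingEnd ℂ) (cInner a b)) ^ (k - r) * (cInner a b) ^ (l - r)) * h0

end S9

end

open scoped Classical

/-- positive semidefiniteness of the zonal kernels: for any finite
`X ⊆ Ω(d)`, `∑_{a,b∈X} g_{k,l}(a^*b)` is a nonnegative real number. -/
theorem stmt_9 {d : ℕ} (hd : 2 ≤ d) (X : Finset (Fin d → ℂ))
    (hXsphere : ∀ x ∈ X, cInner x x = 1) (k l : ℕ) :
    (∑ a ∈ X, ∑ b ∈ X, jacobi d k l (cInner a b)).im = 0 ∧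
    0 ≤ (∑ a ∈ X, ∑ b ∈ X, jacobi d k l (cInner a b)).re := by
  classical
  set W : S9.PP d := ∑ a ∈ X, S9.Zb d k l a with hW
  set R : ℝ := ∑ m ∈ W.support, (S9.wN m : ℝ) * Complex.normSq (MvPolynomial.coeff m W) with hR
  have hRnn : 0 ≤ R := Finset.sum_nonneg fun m _ =>
    mul_nonneg (Nat.cast_nonneg _) (Complex.normSq_nonneg _)
  have hFPWW : S9.FP W W = (R : ℂ) := by
    rw [S9.FP, hR, Complex.ofReal_sum]
    refine Finset.sum_congr rfl fun m _ => ?_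
    rw [Complex.ofReal_mul, mul_assoc, mul_comm ((starRingEnd ℂ) _) _, Complex.mul_conj]
    norm_cast
  have hjac : ∀ x : ℂ, jacobi d k l x
      = (((d + k + l - 1 : ℕ) : ℂ) / ((Nat.factorial (d - 1) : ℂ)))
        * ∑ r ∈ Finset.range (min k l + 1),
            S9.ccf d k l r * x ^ (k - r) * ((starRingEnd ℂ) x) ^ (l - r) := by
    intro x
    simp only [jacobi, S9.ccf]
  have hswap : (∑ a ∈ X, ∑ b ∈ X, ∑ r ∈ Finset.range (min k l + 1),
        S9.ccf d k l r * (cInner a b) ^ (k - r) * ((starRingEnd ℂ) (cInner a b)) ^ (l - r))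
      = ∑ a ∈ X, ∑ b ∈ X, ∑ r ∈ Finset.range (min k l + 1),
        S9.ccf d k l r * ((starRingEnd ℂ) (cInner a b)) ^ (k - r) * (cInner a b) ^ (l - r) := by
    rw [Finset.sum_comm]
    refine Finset.sum_congr rfl fun a _ => Finset.sum_congr rfl fun b _ => ?_
    refine Finset.sum_congr rfl fun r _ => ?_
    have hba : cInner b a = (starRingEnd ℂ) (cInner a b) := (S9.cInner_conj a b).symm
    rw [hba, Complex.conj_conj]
  have hpair : ∀ a ∈ X, ∀ b ∈ X,
      S9.FP (S9.Zb d k l a) (S9.Zb d k l b)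
        = ((Nat.factorial (d + k + l - 2) : ℂ))
          * ∑ r ∈ Finset.range (min k l + 1),
              S9.ccf d k l r * ((starRingEnd ℂ) (cInner a b)) ^ (k - r) * (cInner a b) ^ (l - r) :=
    fun a ha b hb => S9.FP_ZZ hd (hXsphere a ha) (hXsphere b hb)
  have hWW : S9.FP W W = ∑ a ∈ X, ∑ b ∈ X, S9.FP (S9.Zb d k l a) (S9.Zb d k l b) := by
    rw [hW, S9.FP_sum_left]
    exact Finset.sum_congr rfl fun a _ => S9.FP_right_sum
  have hfac : ((Nat.factorial (d + k + l - 2) : ℂ)) ≠ 0 := S9.fact_ne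
  have hsum2 : (∑ a ∈ X, ∑ b ∈ X, ∑ r ∈ Finset.range (min k l + 1),
        S9.ccf d k l r * ((starRingEnd ℂ) (cInner a b)) ^ (k - r) * (cInner a b) ^ (l - r))
      = (R : ℂ) / ((Nat.factorial (d + k + l - 2) : ℂ)) := by
    rw [eq_div_iff hfac]
    calc (∑ a ∈ X, ∑ b ∈ X, ∑ r ∈ Finset.range (min k l + 1),
          S9.ccf d k l r * ((starRingEnd ℂ) (cInner a b)) ^ (k - r) * (cInner a b) ^ (l - r))
            * ((Nat.factorial (d + k + l - 2) : ℂ))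
        = ∑ a ∈ X, ∑ b ∈ X, ((∑ r ∈ Finset.range (min k l + 1),
            S9.ccf d k l r * ((starRingEnd ℂ) (cInner a b)) ^ (k - r) * (cInner a b) ^ (l - r))
              * ((Nat.factorial (d + k + l - 2) : ℂ))) := by
          rw [Finset.sum_mul]
          exact Finset.sum_congr rfl fun a _ => Finset.sum_mul _ _ _
      _ = ∑ a ∈ X, ∑ b ∈ X, S9.FP (S9.Zb d k l a) (S9.Zb d k l b) := by
          refine Finset.sum_congr rfl fun a ha => Finset.sum_congr rfl fun b hb => ?_
          rw [hpair a ha b hb]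
          ring
      _ = (R : ℂ) := by rw [← hWW, hFPWW]
  have hS : (∑ a ∈ X, ∑ b ∈ X, jacobi d k l (cInner a b))
      = (((d + k + l - 1 : ℕ) : ℂ) / ((Nat.factorial (d - 1) : ℂ)))
        * ((R : ℂ) / ((Nat.factorial (d + k + l - 2) : ℂ))) := by
    calc (∑ a ∈ X, ∑ b ∈ X, jacobi d k l (cInner a b))
        = ∑ a ∈ X, ∑ b ∈ X, ((((d + k + l - 1 : ℕ) : ℂ) / ((Nat.factorial (d - 1) : ℂ)))
            * ∑ r ∈ Finset.range (min k l + 1),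
                S9.ccf d k l r * (cInner a b) ^ (k - r)
                  * ((starRingEnd ℂ) (cInner a b)) ^ (l - r)) :=
          Finset.sum_congr rfl fun a _ => Finset.sum_congr rfl fun b _ => hjac (cInner a b)
      _ = (((d + k + l - 1 : ℕ) : ℂ) / ((Nat.factorial (d - 1) : ℂ)))
            * ∑ a ∈ X, ∑ b ∈ X, ∑ r ∈ Finset.range (min k l + 1),
                S9.ccf d k l r * (cInner a b) ^ (k - r)
                  * ((starRingEnd ℂ) (cInner a b)) ^ (l - r) := by
          rw [Finset.mul_sum]
          exact Finset.sum_congr rfl fun a _ => (Finset.mul_sum _ _ _).symm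
      _ = _ := by rw [hswap, hsum2]
  have hreal : (∑ a ∈ X, ∑ b ∈ X, jacobi d k l (cInner a b))
      = Complex.ofReal (((d + k + l - 1 : ℕ) : ℝ) / ((Nat.factorial (d - 1) : ℝ))
          * (R / ((Nat.factorial (d + k + l - 2) : ℝ)))) := by
    rw [hS]
    push_cast
    ring
  rw [hreal]
  refine ⟨Complex.ofReal_im _, ?_⟩
  rw [Complex.ofReal_re]
  exact mul_nonneg (div_nonneg (Nat.cast_nonneg _) (Nat.cast_nonneg _))
    (div_nonneg hRnn (Nat.cast_nonneg _))
end

section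
/- Let d ≥ 1 and let 𝒯 = {(i,j) ∈ ℕ×ℕ : i+j ≤ 3}. Let Y ⊆ Ω(d) be a finite set with Y ∩ (−Y) = ∅, and suppose X = Y ∪ (−Y) is a complex spherical 𝒯-design whose inner product set A(X) has cardinality 3. Then |Y| = 2d, A(X) = {i/√(2d−1), −i/√(2d−1), −1}, and the matrix C indexed by Y×Y with entries C_{xy} = i·√(2d−1)·(x^*y − δ_{x,y}) is a skew-symmetric conference matrix: all its entries are real, its diagonal entries are 0, its off-diagonal entries are ±1, Cᵀ = −C, and C·Cᵀ = (2d−1)·I. -/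
open Finset Matrix

open scoped Classical

open scoped Classical in
/-- The matrix `C` on `Y` with entries `i·√(2d-1)·(x^*y − δ_{x,y})`. -/
noncomputable def confC {d : ℕ} (Y : Finset (Fin d → ℂ)) :
    Matrix {v // v ∈ Y} {v // v ∈ Y} ℂ :=
  fun x y => Complex.I * (Real.sqrt (2 * (d : ℝ) - 1) : ℂ) *
    (cInner x.1 y.1 - if x = y then 1 else 0)

section Helpers

variable {d : ℕ}

lemma aux_cInner_eq_inner (x y : Fin d → ℂ) :
    cInner x y = @inner ℂ (EuclideanSpace ℂ (Fin d)) _ (WithLp.toLp 2 x) (WithLp.toLp 2 y) := by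
  simp [cInner, PiLp.inner_apply, RCLike.inner_apply, mul_comm]

lemma aux_cInner_self_eq_zero {v : Fin d → ℂ} (h : cInner v v = 0) : v = 0 := by
  rw [aux_cInner_eq_inner] at h
  have h2 : (WithLp.toLp 2 v : EuclideanSpace ℂ (Fin d)) = 0 :=
    inner_self_eq_zero (𝕜 := ℂ) (E := EuclideanSpace ℂ (Fin d)) |>.mp h
  simpa using congrArg WithLp.ofLp h2

lemma aux_cInner_sub_left (x y z : Fin d → ℂ) :
    cInner (x - y) z = cInner x z - cInner y z := by
  simp [cInner, ← Finset.sum_sub_distrib]; exact Finset.sum_congr rfl fun i _ => by ring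

lemma aux_cInner_sub_right (x y z : Fin d → ℂ) :
    cInner x (y - z) = cInner x y - cInner x z := by
  simp [cInner, ← Finset.sum_sub_distrib]; exact Finset.sum_congr rfl fun i _ => by ring

lemma aux_cInner_neg_left (x y : Fin d → ℂ) : cInner (-x) y = - cInner x y := by
  simp [cInner]

lemma aux_cInner_neg_right (x y : Fin d → ℂ) : cInner x (-y) = - cInner x y := by
  simp [cInner]

lemma aux_cInner_neg_neg (x y : Fin d → ℂ) : cInner (-x) (-y) = cInner x y := by
  rw [aux_cInner_neg_left, aux_cInner_neg_right, neg_neg]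

lemma aux_cInner_conj (x y : Fin d → ℂ) : (starRingEnd ℂ) (cInner x y) = cInner y x := by
  simp only [cInner, map_sum, _root_.map_mul, Complex.conj_conj]
  exact Finset.sum_congr rfl fun i _ => by ring

lemma aux_eq_of_cInner_eq_one {x y : Fin d → ℂ} (hx : cInner x x = 1) (hy : cInner y y = 1)
    (h : cInner x y = 1) : x = y := by
  have hyx : cInner y x = 1 := by rw [← aux_cInner_conj x y, h, _root_.map_one]
  have h2 : cInner (x - y) (x - y) = 0 := by
    rw [aux_cInner_sub_left, aux_cInner_sub_right, aux_cInner_sub_right, hx, hy, h, hyx]; ring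
  exact sub_eq_zero.mp (aux_cInner_self_eq_zero h2)

lemma aux_eq_neg_of_cInner_eq_neg_one {x y : Fin d → ℂ} (hx : cInner x x = 1)
    (hy : cInner y y = 1) (h : cInner x y = -1) : x = -y := by
  refine aux_eq_of_cInner_eq_one hx ?_ ?_
  · rw [aux_cInner_neg_neg]; exact hy
  · rw [aux_cInner_neg_right, h, neg_neg]

lemma aux_ind_sum (i : Fin d) : (∑ k, if k = i then 1 else 0 : ℕ) = 1 := by
  simp [Finset.sum_ite_eq']

lemma aux_ind_prod (i : Fin d) (z : Fin d → ℂ) :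
    (∏ k, z k ^ (if k = i then 1 else 0)) = z i := by
  have : ∀ k, z k ^ (if k = i then 1 else 0) = if k = i then z k else 1 := by
    intro k; split <;> simp
  simp only [this, Finset.prod_ite_eq']
  simp

lemma aux_ind2_prod (i j : Fin d) (z : Fin d → ℂ) :
    (∏ k, z k ^ ((if k = i then 1 else 0) + (if k = j then 1 else 0))) = z i * z j := by
  simp only [pow_add, Finset.prod_mul_distrib, aux_ind_prod]

lemma aux_design11 (hd : 1 ≤ d) {X : Finset (Fin d → ℂ)} {T : Finset (ℕ × ℕ)}
    (hdes : IsDesign d X T) (hT : (1,1) ∈ T) (i j : Fin d) :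
    (∑ z ∈ X, z i * (starRingEnd ℂ) (z j)) =
      if i = j then (X.card : ℂ) / d else 0 := by
  have h := hdes (1,1) hT (fun k => if k = i then 1 else 0) (fun k => if k = j then 1 else 0)
    (aux_ind_sum i) (aux_ind_sum j)
  have hl : (∑ z ∈ X, (∏ k, (z k) ^ (if k = i then 1 else 0)) *
      ∏ k, ((starRingEnd ℂ) (z k)) ^ (if k = j then 1 else 0)) =
      ∑ z ∈ X, z i * (starRingEnd ℂ) (z j) := by
    refine Finset.sum_congr rfl fun z _ => ?_
    rw [aux_ind_prod i z, aux_ind_prod j (fun k => (starRingEnd ℂ) (z k))]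
  rw [hl] at h
  rw [h]
  unfold monomialAvg
  by_cases hij : i = j
  · subst hij
    rw [if_pos rfl, if_pos rfl]
    have hprod : (∏ k, ((Nat.factorial (if k = i then 1 else 0) : ℂ))) = 1 := by
      apply Finset.prod_eq_one; intro k _; split <;> simp [Nat.factorial]
    rw [hprod, aux_ind_sum i]
    have : d + 1 - 1 = d := by omega
    rw [this]
    have hdf : (Nat.factorial d : ℂ) = d * Nat.factorial (d-1) := by
      rw [← Nat.mul_factorial_pred (by omega : d ≠ 0)]; push_cast; ring
    rw [hdf, mul_one]
    have hd0 : (d:ℂ) ≠ 0 := by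
      simpa using Nat.cast_ne_zero (R := ℂ).mpr (by omega : d ≠ 0)
    have hf0 : (Nat.factorial (d-1) : ℂ) ≠ 0 := by
      exact_mod_cast Nat.cast_ne_zero (R := ℂ).mpr (Nat.factorial_ne_zero _)
    field_simp
  · rw [if_neg hij, if_neg ?_, mul_zero]
    intro hfun
    have := congrFun hfun i
    simp [hij] at this

lemma aux_design20 {X : Finset (Fin d → ℂ)} {T : Finset (ℕ × ℕ)}
    (hdes : IsDesign d X T) (hT : (2,0) ∈ T) (i j : Fin d) :
    (∑ z ∈ X, z i * z j) = 0 := by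
  have h := hdes (2,0) hT (fun k => (if k = i then 1 else 0) + (if k = j then 1 else 0))
    (fun _ => 0) (by rw [Finset.sum_add_distrib, aux_ind_sum, aux_ind_sum]) (by simp)
  have hl : (∑ z ∈ X, (∏ k, (z k) ^ ((if k = i then 1 else 0) + (if k = j then 1 else 0))) *
      ∏ k, ((starRingEnd ℂ) (z k)) ^ (0:ℕ)) = ∑ z ∈ X, z i * z j := by
    refine Finset.sum_congr rfl fun z _ => ?_
    rw [aux_ind2_prod]; simp
  rw [hl] at h
  rw [h]
  unfold monomialAvg
  rw [if_neg, mul_zero]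
  intro hfun
  have := congrFun hfun i
  simp at this

lemma aux_key_factor {α κ : Type*} [Fintype κ] (s t : Finset α) (P Q R S : α → κ → ℂ) :
    ∑ x ∈ s, ∑ y ∈ t, (∑ i, P x i * Q y i) * (∑ j, R x j * S y j)
    = ∑ i, ∑ j, (∑ x ∈ s, P x i * R x j) * (∑ y ∈ t, Q y i * S y j) := by
  simp_rw [Finset.sum_mul_sum]
  have comm := Finset.sum_comm (s := s ×ˢ t) (t := (univ ×ˢ univ : Finset (κ × κ)))
    (f := fun p q => (P p.1 q.1 * Q p.2 q.1) * (R p.1 q.2 * S p.2 q.2))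
  simp only [Finset.sum_product] at comm
  rw [comm]
  refine Finset.sum_congr rfl fun i _ => ?_
  refine Finset.sum_congr rfl fun j _ => ?_
  refine Finset.sum_congr rfl fun x _ => ?_
  refine Finset.sum_congr rfl fun y _ => ?_
  ring

lemma aux_four_le_card {s : Finset ℂ} {a b c e : ℂ} (ha : a ∈ s) (hb : b ∈ s) (hc : c ∈ s)
    (he : e ∈ s) (h1 : a ≠ b) (h2 : a ≠ c) (h3 : a ≠ e) (h4 : b ≠ c) (h5 : b ≠ e)
    (h6 : c ≠ e) : 4 ≤ s.card := by
  have hsub : ({a, b, c, e} : Finset ℂ) ⊆ s := by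
    intro z hz
    simp only [Finset.mem_insert, Finset.mem_singleton] at hz
    rcases hz with rfl | rfl | rfl | rfl <;> assumption
  have hcard : ({a, b, c, e} : Finset ℂ).card = 4 := by
    rw [Finset.card_insert_of_notMem (by simp [h1, h2, h3]),
      Finset.card_insert_of_notMem (by simp [h4, h5]),
      Finset.card_insert_of_notMem (by simp [h6]), Finset.card_singleton]
  calc 4 = ({a, b, c, e} : Finset ℂ).card := hcard.symm
    _ ≤ s.card := Finset.card_le_card hsub

end Helpers

section Helpers2

variable {d : ℕ}

lemma aux_mem_innerSet {X : Finset (Fin d → ℂ)} {x y : Fin d → ℂ} (hx : x ∈ X) (hy : y ∈ X)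
    (hne : x ≠ y) : cInner x y ∈ innerSet X :=
  Finset.mem_image.mpr ⟨(x, y), Finset.mem_filter.mpr ⟨Finset.mem_product.mpr ⟨hx, hy⟩, hne⟩, rfl⟩

lemma aux_innerSet_cases {Y : Finset (Fin d → ℂ)} (hYsphere : ∀ x ∈ Y, cInner x x = 1)
    {α : ℂ} (hα : α ∈ innerSet (Y ∪ Y.image fun x => -x)) :
    α = -1 ∨ ∃ x ∈ Y, ∃ y ∈ Y, x ≠ y ∧ (α = cInner x y ∨ α = -cInner x y) := by
  obtain ⟨⟨u, v⟩, hm, rfl⟩ := Finset.mem_image.mp hα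
  obtain ⟨hp, hne⟩ := Finset.mem_filter.mp hm
  obtain ⟨hu, hv⟩ := Finset.mem_product.mp hp
  simp only [Finset.mem_union, Finset.mem_image] at hu hv
  rcases hu with hu | ⟨w, hw, rfl⟩
  · rcases hv with hv | ⟨w', hw', rfl⟩
    · exact Or.inr ⟨u, hu, v, hv, hne, Or.inl rfl⟩
    · by_cases h : u = w'
      · subst h; left
        show cInner u (-u) = -1
        rw [aux_cInner_neg_right, hYsphere u hu]
      · exact Or.inr ⟨u, hu, w', hw', h, Or.inr (by rw [aux_cInner_neg_right])⟩
  · rcases hv with hv | ⟨w', hw', rfl⟩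
    · by_cases h : w = v
      · subst h; left
        show cInner (-w) w = -1
        rw [aux_cInner_neg_left, hYsphere w hw]
      · exact Or.inr ⟨w, hw, v, hv, h, Or.inr (by rw [aux_cInner_neg_left])⟩
    · refine Or.inr ⟨w, hw, w', hw', fun h => hne (by rw [h]), Or.inl ?_⟩
      rw [aux_cInner_neg_neg]

end Helpers2

set_option maxHeartbeats 1000000 in
/-- a 2-antipodal `{(i,j) : i+j ≤ 3}`-design `X = Y ∪ (−Y)` of
degree 3 gives a skew-symmetric conference matrix `C = i√(2d−1)(G − I)` on `Y`,
with `|Y| = 2d` and `A(X) = {i/√(2d−1), −i/√(2d−1), −1}`. -/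
theorem stmt_17 {d : ℕ} (hd : 1 ≤ d) (Y : Finset (Fin d → ℂ))
    (hYsphere : ∀ x ∈ Y, cInner x x = 1)
    (hYdisj : Disjoint Y (Y.image fun x => -x))
    (hdesign : IsDesign d (Y ∪ Y.image fun x => -x)
      (((Finset.range 4) ×ˢ (Finset.range 4)).filter fun p => p.1 + p.2 ≤ 3))
    (hdeg : (innerSet (Y ∪ Y.image fun x => -x)).card = 3) :
    Y.card = 2 * d ∧
    innerSet (Y ∪ Y.image fun x => -x) =
      {Complex.I / (Real.sqrt (2 * (d : ℝ) - 1) : ℂ),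
       -(Complex.I / (Real.sqrt (2 * (d : ℝ) - 1) : ℂ)), -1} ∧
    (∀ x y : {v // v ∈ Y}, (confC Y x y).im = 0) ∧
    (∀ x : {v // v ∈ Y}, confC Y x x = 0) ∧
    (∀ x y : {v // v ∈ Y}, x ≠ y → confC Y x y = 1 ∨ confC Y x y = -1) ∧
    (confC Y)ᵀ = -(confC Y) ∧
    confC Y * (confC Y)ᵀ = ((2 * (d : ℝ) - 1 : ℝ) : ℂ) • 1 := by
  have hT11 : ((1:ℕ), (1:ℕ)) ∈
      (((Finset.range 4) ×ˢ (Finset.range 4)).filter fun p => p.1 + p.2 ≤ 3) := by decide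
  have hT20 : ((2:ℕ), (0:ℕ)) ∈
      (((Finset.range 4) ×ˢ (Finset.range 4)).filter fun p => p.1 + p.2 ≤ 3) := by decide
  set X := Y ∪ Y.image (fun x => -x) with hX
  set n := Y.card with hn_def
  have hd0C : (d : ℂ) ≠ 0 := by
    simpa using Nat.cast_ne_zero (R := ℂ).mpr (by omega : d ≠ 0)
  have hnotneg : ∀ x ∈ Y, ∀ y ∈ Y, x ≠ -y := by
    intro x hx y hy h
    exact Finset.disjoint_left.mp hYdisj hx (h ▸ Finset.mem_image_of_mem _ hy)
  have hmemXY : ∀ x ∈ Y, x ∈ X := fun x hx => Finset.mem_union_left _ hx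
  have hmemXn : ∀ x ∈ Y, -x ∈ X := fun x hx =>
    Finset.mem_union_right _ (Finset.mem_image_of_mem _ hx)
  have hcardX : X.card = 2 * n := by
    rw [hX, Finset.card_union_of_disjoint hYdisj,
      Finset.card_image_of_injective _ neg_injective, two_mul]
  have hsplit : ∀ f : (Fin d → ℂ) → ℂ, (∀ z, f (-z) = f z) →
      ∑ z ∈ X, f z = 2 * ∑ z ∈ Y, f z := by
    intro f hf
    rw [hX, Finset.sum_union hYdisj, Finset.sum_image (fun a _ b _ h => neg_injective h)]
    simp only [hf]
    ring
  have hY11 : ∀ i j, (∑ z ∈ Y, z i * (starRingEnd ℂ) (z j)) =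
      if i = j then (n : ℂ) / d else 0 := by
    intro i j
    have hX11 := aux_design11 hd hdesign hT11 i j
    have h2 : ∑ z ∈ X, z i * (starRingEnd ℂ) (z j) =
        2 * ∑ z ∈ Y, z i * (starRingEnd ℂ) (z j) :=
      hsplit _ (fun z => by simp [Pi.neg_apply])
    rw [h2, hcardX] at hX11
    have h3 : (2:ℂ) * (∑ z ∈ Y, z i * (starRingEnd ℂ) (z j)) =
        2 * (if i = j then (n : ℂ) / d else 0) := by
      rw [hX11]; push_cast; split <;> ring
    exact mul_left_cancel₀ two_ne_zero h3
  have hY20 : ∀ i j, (∑ z ∈ Y, z i * z j) = 0 := by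
    intro i j
    have hX20 := aux_design20 hdesign hT20 i j
    have h2 : ∑ z ∈ X, z i * z j = 2 * ∑ z ∈ Y, z i * z j :=
      hsplit _ (fun z => by simp [Pi.neg_apply])
    rw [h2] at hX20
    exact mul_left_cancel₀ two_ne_zero (by rw [hX20]; ring)
  have hn2 : 2 ≤ n := by
    by_contra hcon
    push_neg at hcon
    have hsub : innerSet X ⊆ {-1} := by
      intro α hα
      rcases aux_innerSet_cases hYsphere hα with h1 | ⟨x, hx, y, hy, hxy, _⟩
      · simp [h1]
      · exact absurd (Finset.card_le_one.mp (by omega) x hx y hy) hxy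
    have := Finset.card_le_card hsub
    rw [hdeg] at this
    simp at this
  obtain ⟨x₀, hx₀, y₀, hy₀, hxy₀⟩ := Finset.one_lt_card.mp (by omega : 1 < Y.card)
  set β := cInner x₀ y₀ with hβ_def
  have hne1 : ∀ x ∈ Y, ∀ y ∈ Y, x ≠ y → cInner x y ≠ 1 ∧ cInner x y ≠ -1 := by
    intro x hx y hy hxy
    refine ⟨fun h => hxy (aux_eq_of_cInner_eq_one (hYsphere x hx) (hYsphere y hy) h),
      fun h => hnotneg x hx y hy (aux_eq_neg_of_cInner_eq_neg_one (hYsphere x hx)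
        (hYsphere y hy) h)⟩
  have hmemβ : ∀ x ∈ Y, ∀ y ∈ Y, x ≠ y →
      cInner x y ∈ innerSet X ∧ -cInner x y ∈ innerSet X := by
    intro x hx y hy hxy
    refine ⟨aux_mem_innerSet (hmemXY x hx) (hmemXY y hy) hxy, ?_⟩
    rw [show -cInner x y = cInner x (-y) from (aux_cInner_neg_right x y).symm]
    exact aux_mem_innerSet (hmemXY x hx) (hmemXn y hy) (hnotneg x hx y hy)
  have hmem1 : (-1 : ℂ) ∈ innerSet X := by
    rw [show (-1 : ℂ) = cInner x₀ (-x₀) by rw [aux_cInner_neg_right, hYsphere x₀ hx₀]]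
    exact aux_mem_innerSet (hmemXY x₀ hx₀) (hmemXn x₀ hx₀) (hnotneg x₀ hx₀ x₀ hx₀)
  have hpm : ∀ x ∈ Y, ∀ y ∈ Y, x ≠ y → cInner x y = β ∨ cInner x y = -β := by
    intro x hx y hy hxy
    by_contra hcon
    push_neg at hcon
    obtain ⟨hγ1, hγ2⟩ := hcon
    have hγmem := hmemβ x hx y hy hxy
    have hβmem := hmemβ x₀ hx₀ y₀ hy₀ hxy₀
    have hβne := hne1 x₀ hx₀ y₀ hy₀ hxy₀
    have hγne := hne1 x hx y hy hxy
    have h4 : 4 ≤ (innerSet X).card := by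
      by_cases hb : β = -β
      · have hb0 : β = 0 := by
          have h2 : (2:ℂ) * β = 0 := by linear_combination hb
          exact (mul_eq_zero.mp h2).resolve_left two_ne_zero
        have h0mem : (0:ℂ) ∈ innerSet X := by rw [← hb0]; exact hβmem.1
        refine aux_four_le_card hmem1 h0mem hγmem.1 hγmem.2 ?_ ?_ ?_ ?_ ?_ ?_
        · norm_num
        · exact fun h => hγne.2 h.symm
        · exact fun h => hγne.1 (by linear_combination h)
        · exact fun h => hγ1 (by rw [hb0]; linear_combination -h)
        · exact fun h => hγ1 (by rw [hb0]; linear_combination h)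
        · exact fun h => hγ1 (by rw [hb0]; linear_combination h/2)
      · by_cases hg : cInner x y = -cInner x y
        · have hγ0 : cInner x y = 0 := by
            have h2 : (2:ℂ) * cInner x y = 0 := by linear_combination hg
            exact (mul_eq_zero.mp h2).resolve_left two_ne_zero
        
          have h0mem : (0:ℂ) ∈ innerSet X := by rw [← hγ0]; exact hγmem.1
          refine aux_four_le_card hmem1 h0mem hβmem.1 hβmem.2 ?_ ?_ ?_ ?_ ?_ ?_
          · norm_num
          · exact fun h => hβne.2 h.symm
          · exact fun h => hβne.1 (by linear_combination h)
          · exact fun h => hγ1 (by rw [hγ0]; exact h)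
          · exact fun h => hγ2 (by rw [hγ0]; exact h)
          · exact hb
        · refine aux_four_le_card hmem1 hβmem.1 hβmem.2 hγmem.1 ?_ ?_ ?_ ?_ ?_ ?_
          · exact fun h => hβne.2 h.symm
          · exact fun h => hβne.1 (by linear_combination h)
          · exact fun h => hγne.2 h.symm
          · exact hb
          · exact fun h => hγ1 h.symm
          · exact fun h => hγ2 h.symm
    rw [hdeg] at h4
    omega
  have hβ0 : β ≠ 0 := by
    intro h0
    have hsub : innerSet X ⊆ {-1, 0} := by
      intro α hα
      rcases aux_innerSet_cases hYsphere hα with h1 | ⟨x, hx, y, hy, hxy, hv⟩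
      · simp [h1]
      · rcases hpm x hx y hy hxy with h | h <;> rcases hv with rfl | rfl <;>
          simp [h, h0]
    have hle := Finset.card_le_card hsub
    rw [hdeg] at hle
    have h2 : ({-1, 0} : Finset ℂ).card ≤ 2 :=
      le_trans (Finset.card_insert_le _ _) (by simp)
    omega
  have hnC0 : (n : ℂ) ≠ 0 := by
    simpa using Nat.cast_ne_zero (R := ℂ).mpr (by omega : n ≠ 0)
  -- sum of squares of inner products over Y × Y
  have hT2 : (n : ℂ) * (1 + ((n : ℂ) - 1) * β ^ 2) = 0 := by
    have e1 : ∑ x ∈ Y, ∑ y ∈ Y, (cInner x y) ^ 2 = 0 := by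
      calc ∑ x ∈ Y, ∑ y ∈ Y, (cInner x y) ^ 2
          = ∑ x ∈ Y, ∑ y ∈ Y,
              (∑ i, (starRingEnd ℂ) (x i) * y i) * (∑ j, (starRingEnd ℂ) (x j) * y j) := by
            refine Finset.sum_congr rfl fun x _ => Finset.sum_congr rfl fun y _ => ?_
            rw [pow_two]; rfl
        _ = ∑ i, ∑ j, (∑ x ∈ Y, (starRingEnd ℂ) (x i) * (starRingEnd ℂ) (x j)) *
              (∑ y ∈ Y, y i * y j) :=
            aux_key_factor Y Y (fun x i => (starRingEnd ℂ) (x i)) (fun y i => y i)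
              (fun x j => (starRingEnd ℂ) (x j)) (fun y j => y j)
        _ = 0 := by simp [hY20]
    have e2 : ∑ x ∈ Y, ∑ y ∈ Y, (cInner x y) ^ 2 = (n : ℂ) * (1 + ((n : ℂ) - 1) * β ^ 2) := by
      have hrow : ∀ x ∈ Y, ∑ y ∈ Y, (cInner x y) ^ 2 = 1 + ((n : ℂ) - 1) * β ^ 2 := by
        intro x hx
        rw [← Finset.sum_erase_add Y _ hx]
        have h1 : (cInner x x) ^ 2 = 1 := by rw [hYsphere x hx]; ring
        have h2 : ∑ y ∈ Y.erase x, (cInner x y) ^ 2 = ((n : ℂ) - 1) * β ^ 2 := by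
          have hval : ∀ y ∈ Y.erase x, (cInner x y) ^ 2 = β ^ 2 := by
            intro y hy
            obtain ⟨hyx, hyY⟩ := Finset.mem_erase.mp hy
            rcases hpm x hx y hyY (fun h => hyx h.symm) with h | h <;> rw [h] <;> ring
          rw [Finset.sum_congr rfl hval, Finset.sum_const, Finset.card_erase_of_mem hx,
            nsmul_eq_mul]
          congr 1
          rw [← hn_def]
          push_cast [Nat.cast_sub (by omega : 1 ≤ n)]
          ring
        rw [h1, h2]
        ring
      rw [Finset.sum_congr rfl hrow, Finset.sum_const, nsmul_eq_mul]
    rw [← e2]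
    exact e1
  have hT1 : (n : ℂ) * (1 + ((n : ℂ) - 1) * (β * (starRingEnd ℂ) β)) = (n : ℂ) ^ 2 / d := by
    have e1 : ∑ x ∈ Y, ∑ y ∈ Y, cInner x y * (starRingEnd ℂ) (cInner x y)
        = (n : ℂ) ^ 2 / d := by
      have hY11' : ∀ i j, (∑ x ∈ Y, (starRingEnd ℂ) (x i) * x j) =
          if i = j then (n : ℂ) / d else 0 := by
        intro i j
        have h := congrArg (starRingEnd ℂ) (hY11 i j)
        rw [map_sum] at h
        simp only [_root_.map_mul, Complex.conj_conj] at h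
        rw [h]
        split <;> simp [map_div₀]
      calc ∑ x ∈ Y, ∑ y ∈ Y, cInner x y * (starRingEnd ℂ) (cInner x y)
          = ∑ x ∈ Y, ∑ y ∈ Y,
              (∑ i, (starRingEnd ℂ) (x i) * y i) * (∑ j, x j * (starRingEnd ℂ) (y j)) := by
            refine Finset.sum_congr rfl fun x _ => Finset.sum_congr rfl fun y _ => ?_
            rw [aux_cInner_conj]
            congr 1
            exact Finset.sum_congr rfl fun j _ => by ring
        _ = ∑ i, ∑ j, (∑ x ∈ Y, (starRingEnd ℂ) (x i) * x j) *
              (∑ y ∈ Y, y i * (starRingEnd ℂ) (y j)) :=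
            aux_key_factor Y Y (fun x i => (starRingEnd ℂ) (x i)) (fun y i => y i)
              (fun x j => x j) (fun y j => (starRingEnd ℂ) (y j))
        _ = ∑ i : Fin d, ((n : ℂ) / d) * ((n : ℂ) / d) := by
            refine Finset.sum_congr rfl fun i _ => ?_
            simp only [hY11', hY11]
            rw [Finset.sum_eq_single i]
            · simp
            · intro j _ hji
              simp [Ne.symm hji, fun h : i = j => hji h.symm]
            · intro h
              exact absurd (Finset.mem_univ i) h
        _ = (n : ℂ) ^ 2 / d := by
            rw [Finset.sum_const, Finset.card_univ, Fintype.card_fin, nsmul_eq_mul]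
            field_simp
    have e2 : ∑ x ∈ Y, ∑ y ∈ Y, cInner x y * (starRingEnd ℂ) (cInner x y)
        = (n : ℂ) * (1 + ((n : ℂ) - 1) * (β * (starRingEnd ℂ) β)) := by
      have hrow : ∀ x ∈ Y, ∑ y ∈ Y, cInner x y * (starRingEnd ℂ) (cInner x y)
          = 1 + ((n : ℂ) - 1) * (β * (starRingEnd ℂ) β) := by
        intro x hx
        rw [← Finset.sum_erase_add Y _ hx]
        have h1 : cInner x x * (starRingEnd ℂ) (cInner x x) = 1 := by
          rw [hYsphere x hx]; simp
        have h2 : ∑ y ∈ Y.erase x, cInner x y * (starRingEnd ℂ) (cInner x y)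
            = ((n : ℂ) - 1) * (β * (starRingEnd ℂ) β) := by
          have hval : ∀ y ∈ Y.erase x, cInner x y * (starRingEnd ℂ) (cInner x y)
              = β * (starRingEnd ℂ) β := by
            intro y hy
            obtain ⟨hyx, hyY⟩ := Finset.mem_erase.mp hy
            rcases hpm x hx y hyY (fun h => hyx h.symm) with h | h <;> rw [h] <;>
              simp [map_neg] <;> ring
          rw [Finset.sum_congr rfl hval, Finset.sum_const, Finset.card_erase_of_mem hx,
            nsmul_eq_mul]
          congr 1
          rw [← hn_def]
          push_cast [Nat.cast_sub (by omega : 1 ≤ n)]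
          ring
        rw [h1, h2]
        ring
      rw [Finset.sum_congr rfl hrow, Finset.sum_const, nsmul_eq_mul]
    rw [← e2, e1]
  -- derive β² = -1/(n-1)
  have hfac : 1 + ((n : ℂ) - 1) * β ^ 2 = 0 :=
    (mul_eq_zero.mp hT2).resolve_left hnC0
  have hc1 : ((n : ℂ) - 1) ≠ 0 := by
    intro h
    rw [h, zero_mul, add_zero] at hfac
    exact one_ne_zero hfac
  set c : ℝ := (n : ℝ) - 1 with hc_def
  have hcpos : 0 < c := by
    have : (2 : ℝ) ≤ (n : ℝ) := by exact_mod_cast hn2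
    simp only [hc_def]; linarith
  have hcC : ((c : ℝ) : ℂ) = (n : ℂ) - 1 := by push_cast [hc_def]; ring
  have hβsqR : β ^ 2 = ((-(1 / c) : ℝ) : ℂ) := by
    have h1 : ((n : ℂ) - 1) * β ^ 2 = -1 := by linear_combination hfac
    push_cast
    rw [hcC]
    field_simp
    linear_combination hfac
  have him_eq : β.re * β.im + β.im * β.re = 0 := by
    have := congrArg Complex.im hβsqR
    simpa [pow_two, Complex.mul_im] using this
  have hre_eq : β.re * β.re - β.im * β.im = -(1 / c) := by
    have := congrArg Complex.re hβsqR
    simpa [pow_two, Complex.mul_re] using this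
  have hre0 : β.re = 0 := by
    by_contra hre
    have him0 : β.im = 0 := by
      have h2 : β.re * β.im = 0 := by nlinarith [him_eq]
      rcases mul_eq_zero.mp h2 with h | h
      · exact absurd h hre
      · exact h
    rw [him0] at hre_eq
    have : 0 < 1 / c := by positivity
    nlinarith [mul_self_nonneg β.re]
  have him2 : β.im * β.im = 1 / c := by
    rw [hre0] at hre_eq
    linarith
  have hmc : β * (starRingEnd ℂ) β = ((1 / c : ℝ) : ℂ) := by
    rw [Complex.mul_conj]
    congr 1
    rw [Complex.normSq_apply, hre0]
    simpa using him2
  rw [hmc] at hT1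
  have hcC0 : ((c : ℝ) : ℂ) ≠ 0 := by
    exact_mod_cast ne_of_gt hcpos
  have hkey : (n : ℂ) * 2 = (n : ℂ) ^ 2 / d := by
    rw [← hT1]
    congr 1
    rw [← hcC]
    push_cast
    field_simp
    norm_num
  have hnat : n * (2 * d) = n * n := by
    have h2 : (n : ℂ) * (2 * d) = (n : ℂ) * n := by
      field_simp at hkey
      linear_combination (n : ℂ) * hkey
    exact_mod_cast h2
  have hn : n = 2 * d := (Nat.eq_of_mul_eq_mul_left (by omega : 0 < n) hnat).symm
  -- the special value ι = I / √(2d-1)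
  set s : ℝ := Real.sqrt (2 * (d : ℝ) - 1) with hs_def
  have h2d1 : (0 : ℝ) < 2 * (d : ℝ) - 1 := by
    have : (1 : ℝ) ≤ (d : ℝ) := by exact_mod_cast hd
    linarith
  have hspos : 0 < s := Real.sqrt_pos.mpr h2d1
  have hs2 : s ^ 2 = 2 * (d : ℝ) - 1 := Real.sq_sqrt (le_of_lt h2d1)
  have hceqd : c = 2 * (d : ℝ) - 1 := by
    rw [hc_def, hn]
    push_cast
    ring
  set ι : ℂ := Complex.I / (s : ℂ) with hι_def
  have hsC0 : ((s : ℝ) : ℂ) ≠ 0 := by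
    exact_mod_cast ne_of_gt hspos
  have hιform : ι = ((1 / s : ℝ) : ℂ) * Complex.I := by
    rw [hι_def]
    push_cast
    field_simp
  have hβι : β = ι ∨ β = -ι := by
    have hinv : (1 / s) ^ 2 = 1 / c := by
      rw [div_pow, one_pow, hs2, ← hceqd]
    have him' : (β.im - 1 / s) * (β.im + 1 / s) = 0 := by
      have : β.im * β.im = (1 / s) ^ 2 := by rw [hinv]; exact him2
      nlinarith [this]
    have hβform : β = ((β.im : ℝ) : ℂ) * Complex.I := by
      apply Complex.ext <;> simp [hre0]
    rcases mul_eq_zero.mp him' with h | h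
    · left
      rw [hβform, hιform, sub_eq_zero.mp h]
    · right
      rw [hβform, hιform]
      have : β.im = -(1 / s) := by linarith
      rw [this]
      push_cast
      ring
  have hval : ∀ x ∈ Y, ∀ y ∈ Y, x ≠ y → cInner x y = ι ∨ cInner x y = -ι := by
    intro x hx y hy hxy
    rcases hpm x hx y hy hxy with h | h <;> rcases hβι with h2 | h2 <;>
      rw [h, h2] <;> simp
  have hιre : ι.re = 0 := by rw [hιform]; simp
  have hιim : ι.im = 1 / s := by rw [hιform]; simp
  have hι0 : ι ≠ 0 := by
    intro h
    rw [hι_def, div_eq_zero_iff] at h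
    rcases h with h | h
    · exact Complex.I_ne_zero h
    · exact hsC0 h
  have hιn1 : ι ≠ -1 := by
    intro h
    have := congrArg Complex.re h
    rw [hιre] at this
    norm_num at this
  have hιn1' : -ι ≠ -1 := by
    intro h
    have := congrArg Complex.re h
    simp [hιre] at this
  have hconjι : (starRingEnd ℂ) ι = -ι := by
    rw [hι_def, map_div₀, Complex.conj_I, Complex.conj_ofReal, neg_div]
  -- component 2 : the inner product set
  have hset : innerSet X = {ι, -ι, -1} := by
    have hsub : innerSet X ⊆ {ι, -ι, -1} := by
      intro α hα
      rcases aux_innerSet_cases hYsphere hα with h1 | ⟨x, hx, y, hy, hxy, hv⟩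
      · simp [h1]
      · rcases hval x hx y hy hxy with h | h <;> rcases hv with rfl | rfl <;>
          simp [h]
    refine Finset.eq_of_subset_of_card_le hsub ?_
    rw [hdeg]
    refine le_trans (Finset.card_insert_le _ _) ?_
    have h2 : ({-ι, -1} : Finset ℂ).card ≤ 2 :=
      le_trans (Finset.card_insert_le _ _) (by simp)
    omega
  -- conference matrix entries
  have hCdiag : ∀ x : {v // v ∈ Y}, confC Y x x = 0 := by
    intro x
    show Complex.I * ((s : ℝ) : ℂ) * (cInner x.1 x.1 - if x = x then 1 else 0) = 0
    rw [hYsphere x.1 x.2, if_pos rfl, sub_self, mul_zero]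
  have hIsι : Complex.I * ((s : ℝ) : ℂ) * ι = -1 := by
    rw [hι_def]
    rw [show Complex.I * ((s : ℝ) : ℂ) * (Complex.I / ((s : ℝ) : ℂ)) =
      (Complex.I * Complex.I) * (((s : ℝ) : ℂ) / ((s : ℝ) : ℂ)) from by ring]
    rw [Complex.I_mul_I, div_self hsC0]
    ring
  have hCoff : ∀ x y : {v // v ∈ Y}, x ≠ y → confC Y x y = 1 ∨ confC Y x y = -1 := by
    intro x y hxy
    have hne : x.1 ≠ y.1 := fun h => hxy (Subtype.ext h)
    have : confC Y x y = Complex.I * ((s : ℝ) : ℂ) * cInner x.1 y.1 := by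
      show Complex.I * ((s : ℝ) : ℂ) * (cInner x.1 y.1 - if x = y then 1 else 0) = _
      rw [if_neg hxy, sub_zero]
    rcases hval x.1 x.2 y.1 y.2 hne with h | h
    · right
      rw [this, h, hIsι]
    · left
      rw [this, h]
      rw [show Complex.I * ((s : ℝ) : ℂ) * -ι = -(Complex.I * ((s : ℝ) : ℂ) * ι) by ring,
        hIsι, neg_neg]
  have hCim : ∀ x y : {v // v ∈ Y}, (confC Y x y).im = 0 := by
    intro x y
    by_cases h : x = y
    · rw [h, hCdiag]; rfl
    · rcases hCoff x y h with h2 | h2 <;> rw [h2] <;> simp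
  have hCskew : (confC Y)ᵀ = -(confC Y) := by
    ext x y
    rw [Matrix.transpose_apply, Matrix.neg_apply]
    by_cases h : x = y
    · rw [h, hCdiag, neg_zero]
    · have hne : x.1 ≠ y.1 := fun h2 => h (Subtype.ext h2)
      have hyx : cInner y.1 x.1 = -cInner x.1 y.1 := by
        rw [← aux_cInner_conj]
        rcases hval x.1 x.2 y.1 y.2 hne with h2 | h2 <;> rw [h2]
        · rw [hconjι]
        · rw [map_neg, hconjι, neg_neg]
      show Complex.I * ((s : ℝ) : ℂ) * (cInner y.1 x.1 - if y = x then 1 else 0) =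
        -(Complex.I * ((s : ℝ) : ℂ) * (cInner x.1 y.1 - if x = y then 1 else 0))
      rw [if_neg h, if_neg (fun h2 => h h2.symm), sub_zero, sub_zero, hyx]
      ring
  have hGzero : ∀ x ∈ Y, ∀ y ∈ Y, (∑ z ∈ Y, cInner x z * cInner y z) = 0 := by
    intro x hx y hy
    have expand : ∀ z : Fin d → ℂ, cInner x z * cInner y z =
        ∑ i, ∑ j, ((starRingEnd ℂ) (x i) * (starRingEnd ℂ) (y j)) * (z i * z j) := by
      intro z
      rw [show cInner x z * cInner y z =
        (∑ i, (starRingEnd ℂ) (x i) * z i) * (∑ j, (starRingEnd ℂ) (y j) * z j) from rfl]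
      rw [Finset.sum_mul_sum]
      exact Finset.sum_congr rfl fun i _ => Finset.sum_congr rfl fun j _ => by ring
    calc ∑ z ∈ Y, cInner x z * cInner y z
        = ∑ z ∈ Y, ∑ i, ∑ j, ((starRingEnd ℂ) (x i) * (starRingEnd ℂ) (y j)) * (z i * z j) :=
          Finset.sum_congr rfl fun z _ => expand z
      _ = ∑ i, ∑ z ∈ Y, ∑ j, ((starRingEnd ℂ) (x i) * (starRingEnd ℂ) (y j)) * (z i * z j) :=
          Finset.sum_comm
      _ = ∑ i, ∑ j, ∑ z ∈ Y, ((starRingEnd ℂ) (x i) * (starRingEnd ℂ) (y j)) * (z i * z j) :=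
          Finset.sum_congr rfl fun i _ => Finset.sum_comm
      _ = 0 := by
          refine Finset.sum_eq_zero fun i _ => Finset.sum_eq_zero fun j _ => ?_
          rw [← Finset.mul_sum, hY20, mul_zero]
  have hs2C : Complex.I * ((s : ℝ) : ℂ) * (Complex.I * ((s : ℝ) : ℂ)) =
      -(((2 * (d : ℝ) - 1 : ℝ) : ℂ)) := by
    have : ((s : ℝ) : ℂ) * ((s : ℝ) : ℂ) = ((2 * (d : ℝ) - 1 : ℝ) : ℂ) := by
      rw [← Complex.ofReal_mul, ← sq, hs2]
    rw [show Complex.I * ((s : ℝ) : ℂ) * (Complex.I * ((s : ℝ) : ℂ)) =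
      Complex.I * Complex.I * (((s : ℝ) : ℂ) * ((s : ℝ) : ℂ)) by ring, Complex.I_mul_I, this]
    ring
  have hCprod : confC Y * (confC Y)ᵀ = ((2 * (d : ℝ) - 1 : ℝ) : ℂ) • 1 := by
    ext x y
    rw [Matrix.mul_apply]
    have hterm : ∀ z : {v // v ∈ Y}, confC Y x z * (confC Y)ᵀ z y =
        -(((2 * (d : ℝ) - 1 : ℝ) : ℂ)) *
          ((cInner x.1 z.1 - if x = z then 1 else 0) *
            (cInner y.1 z.1 - if y = z then 1 else 0)) := by
      intro z
      rw [Matrix.transpose_apply]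
      show (Complex.I * ((s : ℝ) : ℂ) * (cInner x.1 z.1 - if x = z then 1 else 0)) *
        (Complex.I * ((s : ℝ) : ℂ) * (cInner y.1 z.1 - if y = z then 1 else 0)) = _
      rw [← hs2C]
      ring
    rw [Finset.sum_congr rfl (fun z _ => hterm z), ← Finset.mul_sum]
    have hexp : ∀ z : {v // v ∈ Y},
        (cInner x.1 z.1 - if x = z then 1 else 0) *
          (cInner y.1 z.1 - if y = z then 1 else 0)
        = cInner x.1 z.1 * cInner y.1 z.1
          - (if x = z then cInner y.1 z.1 else 0)
          - (if y = z then cInner x.1 z.1 else 0)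
          + (if x = z then (if y = z then 1 else 0) else 0) := by
      intro z
      by_cases h1 : x = z <;> by_cases h2 : y = z <;> simp [h1, h2] <;> ring
    rw [Finset.sum_congr rfl (fun z _ => hexp z)]
    rw [Finset.sum_add_distrib, Finset.sum_sub_distrib, Finset.sum_sub_distrib]
    have e0 : ∑ z : {v // v ∈ Y}, cInner x.1 z.1 * cInner y.1 z.1 = 0 := by
      rw [Finset.univ_eq_attach, Finset.sum_attach Y (fun z => cInner x.1 z * cInner y.1 z)]
      exact hGzero x.1 x.2 y.1 y.2
    have e1 : ∑ z : {v // v ∈ Y}, (if x = z then cInner y.1 z.1 else 0) = cInner y.1 x.1 := by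
      simp
    have e2 : ∑ z : {v // v ∈ Y}, (if y = z then cInner x.1 z.1 else 0) = cInner x.1 y.1 := by
      simp
    have e3 : ∑ z : {v // v ∈ Y}, (if x = z then (if y = z then 1 else 0) else 0)
        = if y = x then (1 : ℂ) else 0 := by
      rw [Finset.sum_eq_single x]
      · simp [eq_comm]
      · intro b _ hbx
        rw [if_neg (fun h => hbx h.symm)]
      · intro h
        exact absurd (Finset.mem_univ x) h
    rw [e0, e1, e2, e3]
    by_cases h : x = y
    · subst h
      rw [if_pos rfl, hYsphere x.1 x.2]
      rw [Matrix.smul_apply, Matrix.one_apply_eq, smul_eq_mul, mul_one]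
      ring
    · have hne : x.1 ≠ y.1 := fun h2 => h (Subtype.ext h2)
      have hyx : cInner y.1 x.1 = -cInner x.1 y.1 := by
        rw [← aux_cInner_conj]
        rcases hval x.1 x.2 y.1 y.2 hne with h2 | h2 <;> rw [h2]
        · rw [hconjι]
        · rw [map_neg, hconjι, neg_neg]
      rw [if_neg (fun h2 => h h2.symm), hyx]
      rw [Matrix.smul_apply, Matrix.one_apply_ne h, smul_eq_mul, mul_zero]
      ring
  exact ⟨hn, hset, hCim, hCdiag, hCoff, hCskew, hCprod⟩
end

section
/- Let q ≥ 3, let d ≥ 1, let 2 ≤ t ≤ r ≤ d, and let ω ∈ ℂ be a primitive q-th root of unity. Let X be a nonempty set of words of length d over the alphabet {0,1,…,q}, each having exactly r nonzero entries, such that for some constant λ_t, every word y of length d with exactly t nonzero entries (each in {1,…,q}) satisfies |{x ∈ X : y ⪯ x}| = λ_t, where y ⪯ x means that for every index i, either y_i = 0 or y_i = x_i (i.e., X is a nonbinary block t-design). Define ψ(x) ∈ ℂ^d by ψ(x)_k = ω^{x_k}/√r if x_k ≠ 0 and ψ(x)_k = 0 if x_k = 0; then ψ is injective on X, ψ(X)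 ⊆ Ω(d), and ψ(X) is a complex spherical 𝒯-design for 𝒯 = {(k,l) ∈ ℕ×ℕ : k+l ≤ 2}. -/
open Finset

open scoped Classical


lemma filter_perm_card {α : Type*} [Fintype α] (σ : Equiv.Perm α)
    (p : α → Prop) [DecidablePred fun j => p (σ j)] [DecidablePred p] :
    (univ.filter fun j => p (σ j)).card = (univ.filter p).card := by
  apply Finset.card_bij (fun a _ => σ a)
  · intro a ha; simp only [mem_filter, mem_univ, true_and] at ha ⊢; exact ha
  · intro a _ b _ h; exact σ.injective h
  · intro b hb; refine ⟨σ.symm b, ?_, by simp⟩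
    simp only [mem_filter, mem_univ, true_and] at hb ⊢
    simpa using hb

lemma exists_perm_iff_mem {α : Type*} [Fintype α] [DecidableEq α] (S S' : Finset α)
    (h : S.card = S'.card) : ∃ σ : Equiv.Perm α, ∀ j, σ j ∈ S ↔ j ∈ S' := by
  have hc : (S'ᶜ : Finset α).card = (Sᶜ : Finset α).card := by
    rw [Finset.card_compl, Finset.card_compl, h]
  have e₁ : {x // x ∈ S'} ≃ {x // x ∈ S} := Finset.equivOfCardEq h.symm
  have e₂ : {x // x ∈ S'ᶜ} ≃ {x // x ∈ Sᶜ} := Finset.equivOfCardEq hc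
  have e₂' : {x // ¬ x ∈ S'} ≃ {x // ¬ x ∈ S} := by
    refine (Equiv.subtypeEquivRight ?_).trans (e₂.trans (Equiv.subtypeEquivRight ?_)) <;>
      intro x <;> simp [Finset.mem_compl]
  refine ⟨(Equiv.sumCompl (· ∈ S')).symm.trans ((e₁.sumCongr e₂').trans
    (Equiv.sumCompl (· ∈ S))), fun j => ?_⟩
  by_cases hj : j ∈ S'
  · rw [Equiv.trans_apply, Equiv.trans_apply, Equiv.sumCompl_symm_apply_of_pos hj]
    simp [hj, (e₁ ⟨j, hj⟩).2]
  · rw [Equiv.trans_apply, Equiv.trans_apply, Equiv.sumCompl_symm_apply_of_neg hj]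
    simp [hj, (e₂' ⟨j, hj⟩).2]

lemma prec_eq {d q : ℕ} {w x : Fin d → Fin (q+1)} (h : ∀ i, w i = 0 ∨ w i = x i) {i : Fin d}
    (hi : w i ≠ 0) : x i = w i := ((h i).resolve_left hi).symm

lemma Ycard_const {d q t : ℕ} (w w' : Fin d → Fin (q+1))
    (h : (univ.filter fun i => w i ≠ 0).card = (univ.filter fun i => w' i ≠ 0).card) :
    ((univ : Finset (Fin d → Fin (q+1))).filter fun y =>
        (∀ i, w i = 0 ∨ w i = y i) ∧ (univ.filter fun i => y i ≠ 0).card = t).card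
      = ((univ : Finset (Fin d → Fin (q+1))).filter fun y =>
        (∀ i, w' i = 0 ∨ w' i = y i) ∧ (univ.filter fun i => y i ≠ 0).card = t).card := by
  obtain ⟨σ, hσ⟩ := exists_perm_iff_mem (univ.filter fun i => w i ≠ 0)
    (univ.filter fun i => w' i ≠ 0) h
  have hσ' : ∀ j, w (σ j) ≠ 0 ↔ w' j ≠ 0 := by
    intro j; have := hσ j; simpa using this
  apply Finset.card_bij' (fun y _ => fun j => if w' j ≠ 0 then w' j else y (σ j))
    (fun y _ => fun k => if w k ≠ 0 then w k else y (σ.symm k))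
  · -- membership forward
    intro y hy
    simp only [mem_filter, mem_univ, true_and] at hy ⊢
    obtain ⟨hwy, hry⟩ := hy
    constructor
    · intro j; by_cases hj : w' j = 0
      · exact Or.inl hj
      · right; simp [hj]
    · have key : ∀ j, (if w' j ≠ 0 then w' j else y (σ j)) ≠ 0 ↔ y (σ j) ≠ 0 := by
        intro j
        by_cases hj : w' j ≠ 0
        · rw [if_pos hj]
          have hwσ : w (σ j) ≠ 0 := (hσ' j).mpr hj
          have := prec_eq hwy hwσ
          constructor
          · intro _; rw [this]; exact hwσ
          · intro _; exact hj
        · simp [hj]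
      rw [← hry]
      rw [filter_congr (fun j _ => by rw [key j])]
      exact filter_perm_card σ (fun i => y i ≠ 0)
  · -- membership backward
    intro y hy
    simp only [mem_filter, mem_univ, true_and] at hy ⊢
    obtain ⟨hwy, hry⟩ := hy
    constructor
    · intro j; by_cases hj : w j = 0
      · exact Or.inl hj
      · right; simp [hj]
    · have key : ∀ j, (if w j ≠ 0 then w j else y (σ.symm j)) ≠ 0 ↔ y (σ.symm j) ≠ 0 := by
        intro j
        by_cases hj : w j ≠ 0
        · rw [if_pos hj]
          have hwσ : w' (σ.symm j) ≠ 0 := by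
            rw [← hσ' (σ.symm j), Equiv.apply_symm_apply]; exact hj
          have := prec_eq hwy hwσ
          constructor
          · intro _; rw [this]; exact hwσ
          · intro _; exact hj
        · simp [hj]
      rw [← hry]
      rw [filter_congr (fun j _ => by rw [key j])]
      exact filter_perm_card σ.symm (fun i => y i ≠ 0)
  · -- left inverse
    intro y hy
    simp only [mem_filter, mem_univ, true_and] at hy
    funext k
    by_cases hk : w k ≠ 0
    · rw [if_pos hk]
      exact (prec_eq hy.1 hk).symm
    · rw [if_neg hk]
      have h2 : ¬ w' (σ.symm k) ≠ 0 := by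
        rw [← hσ' (σ.symm k), Equiv.apply_symm_apply]; exact hk
      show (if w' (σ.symm k) ≠ 0 then w' (σ.symm k) else y (σ (σ.symm k))) = y k
      rw [if_neg h2, Equiv.apply_symm_apply]
  · -- right inverse
    intro y hy
    simp only [mem_filter, mem_univ, true_and] at hy
    funext k
    by_cases hk : w' k ≠ 0
    · rw [if_pos hk]
      exact (prec_eq hy.1 hk).symm
    · rw [if_neg hk]
      have h2 : ¬ w (σ k) ≠ 0 := fun h => hk ((hσ' k).mp h)
      show (if w (σ k) ≠ 0 then w (σ k) else y (σ.symm (σ k))) = y k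
      rw [if_neg h2, Equiv.symm_apply_apply]

lemma prec_eq' {d q : ℕ} {w x : Fin d → Fin (q+1)} (h : ∀ i, w i = 0 ∨ w i = x i) {i : Fin d}
    (hi : w i ≠ 0) : x i = w i := ((h i).resolve_left hi).symm

lemma chain_count {d q t r s : ℕ} (hs : s ≤ t) (x w : Fin d → Fin (q+1))
    (hx : (univ.filter fun i => x i ≠ 0).card = r)
    (hw : (univ.filter fun i => w i ≠ 0).card = s)
    (hwx : ∀ i, w i = 0 ∨ w i = x i) :
    ((univ : Finset (Fin d → Fin (q+1))).filter fun y =>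
        (∀ i, w i = 0 ∨ w i = y i) ∧ (univ.filter fun i => y i ≠ 0).card = t
          ∧ (∀ i, y i = 0 ∨ y i = x i)).card
      = (r - s).choose (t - s) := by
  set Sw := univ.filter fun i => w i ≠ 0 with hSw
  set Sx := univ.filter fun i => x i ≠ 0 with hSx
  have hsub : Sw ⊆ Sx := by
    intro i hi
    simp only [hSw, hSx, mem_filter, mem_univ, true_and] at hi ⊢
    rw [prec_eq' hwx hi]; exact hi
  have hcard : (Sx \ Sw).card = r - s := by
    rw [card_sdiff_of_subset hsub, hx, hw]
  have hchoose : (r - s).choose (t - s) = ((Sx \ Sw).powersetCard (t - s)).card := by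
    rw [card_powersetCard, hcard]
  rw [hchoose]
  apply Finset.card_bij' (fun y _ => (univ.filter fun i => y i ≠ 0) \ Sw)
    (fun T _ => fun i => if i ∈ T ∪ Sw then x i else 0)
  · -- forward membership
    intro y hy
    simp only [mem_filter, mem_univ, true_and] at hy
    obtain ⟨hwy, hty, hyx⟩ := hy
    have hSwy : Sw ⊆ (univ.filter fun i => y i ≠ 0) := by
      intro i hi
      simp only [hSw, mem_filter, mem_univ, true_and] at hi ⊢
      rw [prec_eq' hwy hi]; exact hi
    rw [mem_powersetCard]
    constructor
    · apply Finset.sdiff_subset_sdiff _ (le_refl Sw)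
      intro i hi
      simp only [hSx, mem_filter, mem_univ, true_and] at hi ⊢
      rw [prec_eq' hyx hi]; exact hi
    · rw [card_sdiff_of_subset hSwy, hty, hw]
  · -- backward membership
    intro T hT
    rw [mem_powersetCard] at hT
    obtain ⟨hTsub, hTc⟩ := hT
    have hTSx : T ⊆ Sx := hTsub.trans (Finset.sdiff_subset)
    have hdisj : Disjoint T Sw := (Finset.sdiff_disjoint.mono_left hTsub)
    simp only [mem_filter, mem_univ, true_and]
    have hunion : ∀ i, i ∈ T ∪ Sw → x i ≠ 0 := by
      intro i hi
      rcases Finset.mem_union.mp hi with h | h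
      · have := hTSx h; simp only [hSx, mem_filter, mem_univ, true_and] at this; exact this
      · have := hsub h; simp only [hSx, mem_filter, mem_univ, true_and] at this; exact this
    refine ⟨?_, ?_, ?_⟩
    · intro i
      by_cases hi : w i = 0
      · exact Or.inl hi
      · right
        have hiSw : i ∈ Sw := by simp [hSw, hi]
        rw [if_pos (Finset.mem_union_right _ hiSw)]
        exact (prec_eq' hwx hi).symm
    · have : (univ.filter fun i => (if i ∈ T ∪ Sw then x i else 0) ≠ 0) = T ∪ Sw := by
        ext i
        simp only [mem_filter, mem_univ, true_and]
        by_cases hi : i ∈ T ∪ Sw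
        · simp only [hi, if_pos, iff_true]
          exact hunion i hi
        · simp [hi]
      rw [this, Finset.card_union_of_disjoint hdisj, hTc, hw]
      omega
    · intro i
      by_cases hi : i ∈ T ∪ Sw
      · right; rw [if_pos hi]
      · left; rw [if_neg hi]
  · -- left inverse
    intro y hy
    simp only [mem_filter, mem_univ, true_and] at hy
    obtain ⟨hwy, hty, hyx⟩ := hy
    have hSwy : Sw ⊆ (univ.filter fun i => y i ≠ 0) := by
      intro i hi
      simp only [hSw, mem_filter, mem_univ, true_and] at hi ⊢
      rw [prec_eq' hwy hi]; exact hi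
    funext i
    rw [Finset.sdiff_union_of_subset hSwy]
    by_cases hi : y i = 0
    · rw [if_neg (by simp [hi]), hi]
    · rw [if_pos (by simp [hi])]
      exact (prec_eq' hyx hi)
  · -- right inverse
    intro T hT
    rw [mem_powersetCard] at hT
    obtain ⟨hTsub, hTc⟩ := hT
    have hTSx : T ⊆ Sx := hTsub.trans (Finset.sdiff_subset)
    have hdisj : Disjoint T Sw := (Finset.sdiff_disjoint.mono_left hTsub)
    have hunion : ∀ i, i ∈ T ∪ Sw → x i ≠ 0 := by
      intro i hi
      rcases Finset.mem_union.mp hi with h | h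
      · have := hTSx h; simp only [hSx, mem_filter, mem_univ, true_and] at this; exact this
      · have := hsub h; simp only [hSx, mem_filter, mem_univ, true_and] at this; exact this
    have : (univ.filter fun i => (if i ∈ T ∪ Sw then x i else 0) ≠ 0) = T ∪ Sw := by
      ext i
      simp only [mem_filter, mem_univ, true_and]
      by_cases hi : i ∈ T ∪ Sw
      · simp only [hi, if_pos, iff_true]
        exact hunion i hi
      · simp [hi]
    rw [this, Finset.union_sdiff_right, Finset.sdiff_eq_self_of_disjoint hdisj]
lemma double_count {d q t r s lam : ℕ} (X : Finset (Fin d → Fin (q+1)))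
    (hrank : ∀ x ∈ X, (Finset.univ.filter fun i => x i ≠ 0).card = r)
    (hblock : ∀ y : Fin d → Fin (q + 1),
      (Finset.univ.filter fun i => y i ≠ 0).card = t →
      (X.filter fun x => ∀ i, y i = 0 ∨ y i = x i).card = lam)
    (w : Fin d → Fin (q+1)) (hw : (univ.filter fun i => w i ≠ 0).card = s) (hs : s ≤ t) :
    (X.filter fun x => ∀ i, w i = 0 ∨ w i = x i).card * (r - s).choose (t - s)
      = ((univ : Finset (Fin d → Fin (q+1))).filter fun y =>
          (∀ i, w i = 0 ∨ w i = y i) ∧ (univ.filter fun i => y i ≠ 0).card = t).card * lam := by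
  set Yw := (univ : Finset (Fin d → Fin (q+1))).filter fun y =>
      (∀ i, w i = 0 ∨ w i = y i) ∧ (univ.filter fun i => y i ≠ 0).card = t with hYw
  have rhs : Yw.card * lam = ∑ y ∈ Yw, (X.filter fun x => ∀ i, y i = 0 ∨ y i = x i).card := by
    rw [Finset.sum_congr rfl (fun y hy => ?_), Finset.sum_const, smul_eq_mul]
    simp only [hYw, mem_filter, mem_univ, true_and] at hy
    exact hblock y hy.2
  have swap : ∑ y ∈ Yw, (X.filter fun x => ∀ i, y i = 0 ∨ y i = x i).card
      = ∑ x ∈ X, (Yw.filter fun y => ∀ i, y i = 0 ∨ y i = x i).card := by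
    simp only [Finset.card_filter]
    exact Finset.sum_comm
  have perx : ∀ x ∈ X, (Yw.filter fun y => ∀ i, y i = 0 ∨ y i = x i).card
      = if (∀ i, w i = 0 ∨ w i = x i) then (r - s).choose (t - s) else 0 := by
    intro x hx
    by_cases hwx : ∀ i, w i = 0 ∨ w i = x i
    · rw [if_pos hwx, ← chain_count hs x w (hrank x hx) hw hwx]
      congr 1
      rw [hYw, Finset.filter_filter]
      apply Finset.filter_congr
      intro y _
      tauto
    · rw [if_neg hwx, Finset.card_eq_zero, Finset.filter_eq_empty_iff]
      intro y hy
      simp only [hYw, mem_filter, mem_univ, true_and] at hy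
      intro hyx
      apply hwx
      intro i
      rcases hy.1 i with h | h
      · exact Or.inl h
      · rcases hyx i with h' | h'
        · left
          rw [h, h']
        · right
          rw [h, h']
  rw [rhs, swap, Finset.sum_congr rfl perx, Finset.sum_ite, Finset.sum_const,
    Finset.sum_const_zero, add_zero, smul_eq_mul]

lemma N_const {d q t r lam s : ℕ} (X : Finset (Fin d → Fin (q+1)))
    (hrank : ∀ x ∈ X, (Finset.univ.filter fun i => x i ≠ 0).card = r)
    (hblock : ∀ y : Fin d → Fin (q + 1),
      (Finset.univ.filter fun i => y i ≠ 0).card = t →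
      (X.filter fun x => ∀ i, y i = 0 ∨ y i = x i).card = lam)
    (hs : s ≤ t) (htr : t ≤ r)
    (w w' : Fin d → Fin (q+1))
    (hw : (univ.filter fun i => w i ≠ 0).card = s)
    (hw' : (univ.filter fun i => w' i ≠ 0).card = s) :
    (X.filter fun x => ∀ i, w i = 0 ∨ w i = x i).card
      = (X.filter fun x => ∀ i, w' i = 0 ∨ w' i = x i).card := by
  have h1 := double_count X hrank hblock w hw hs
  have h2 := double_count X hrank hblock w' hw' hs
  have hY := @Ycard_const d q t w w' (hw.trans hw'.symm)
  have hst : t - s ≤ r - s := Nat.sub_le_sub_right htr s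
  have hpos : 0 < (r - s).choose (t - s) := Nat.choose_pos hst
  rw [hY] at h1
  rw [← h2] at h1
  exact Nat.eq_of_mul_eq_mul_right hpos h1


lemma sum_fin_pow {q : ℕ} (ζ : ℂ) (hζ1 : ζ ≠ 1) (hζq : ζ ^ q = 1) :
    ∑ c ∈ (univ : Finset (Fin (q+1))).filter (fun c => c ≠ 0), ζ ^ (c : ℕ) = 0 := by
  have h1 : ∑ c : Fin (q+1), ζ ^ (c : ℕ) = 1 := by
    rw [Fin.sum_univ_eq_sum_range (fun c => ζ ^ c) (q+1), geom_sum_eq hζ1,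
      pow_succ, hζq, one_mul]
    rw [div_eq_one_iff_eq (sub_ne_zero.mpr hζ1)]
  have h2 := Finset.sum_filter_add_sum_filter_not (univ : Finset (Fin (q+1)))
    (fun c => c ≠ 0) (fun c => ζ ^ (c : ℕ))
  have h3 : ((univ : Finset (Fin (q+1))).filter fun c => ¬ c ≠ 0) = {0} := by
    ext c; simp
  rw [h3, Finset.sum_singleton, h1] at h2
  have h4 : ζ ^ ((0 : Fin (q+1)) : ℕ) = 1 := by norm_num
  rw [h4] at h2
  linear_combination h2

lemma card_ne_zero_fin {q : ℕ} :
    ((univ : Finset (Fin (q+1))).filter (fun c => c ≠ 0)).card = q := by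
  have : ((univ : Finset (Fin (q+1))).filter (fun c => c ≠ 0)) = univ.erase 0 := by
    ext c; simp [Finset.mem_erase]
  rw [this, Finset.card_erase_of_mem (mem_univ 0), Finset.card_univ, Fintype.card_fin]
  omega

lemma single_sum {q : ℕ} (F : Fin (q+1) → ℂ) (hF0 : F 0 = 0) (v : Fin (q+1)) :
    ∑ c ∈ (univ : Finset (Fin (q+1))).filter (fun c => c ≠ 0),
      (if v = c then F c else 0) = F v := by
  rw [Finset.sum_ite_eq]
  by_cases hv : v = 0
  · simp [hv, hF0]
  · simp [hv]

lemma group_single {d q : ℕ} (X : Finset (Fin d → Fin (q+1))) (i : Fin d)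
    (F : Fin (q+1) → ℂ) (hF0 : F 0 = 0) :
    ∑ x ∈ X, F (x i)
      = ∑ c ∈ (univ : Finset (Fin (q+1))).filter (fun c => c ≠ 0),
          ((X.filter fun x => x i = c).card : ℂ) * F c := by
  have expand : ∀ x ∈ X, F (x i)
      = ∑ c ∈ (univ : Finset (Fin (q+1))).filter (fun c => c ≠ 0),
          (if x i = c then F c else 0) := fun x _ => (single_sum F hF0 (x i)).symm
  rw [Finset.sum_congr rfl expand, Finset.sum_comm]
  apply Finset.sum_congr rfl
  intro c _
  rw [Finset.sum_ite, Finset.sum_const, Finset.sum_const_zero, add_zero, nsmul_eq_mul]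

lemma group_double {d q : ℕ} (X : Finset (Fin d → Fin (q+1))) (i j : Fin d)
    (F G : Fin (q+1) → ℂ) (hF0 : F 0 = 0) (hG0 : G 0 = 0) :
    ∑ x ∈ X, F (x i) * G (x j)
      = ∑ c ∈ (univ : Finset (Fin (q+1))).filter (fun c => c ≠ 0),
          ∑ c' ∈ (univ : Finset (Fin (q+1))).filter (fun c' => c' ≠ 0),
            ((X.filter fun x => x i = c ∧ x j = c').card : ℂ) * (F c * G c') := by
  have expand : ∀ x ∈ X, F (x i) * G (x j)
      = ∑ c ∈ (univ : Finset (Fin (q+1))).filter (fun c => c ≠ 0),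
          ∑ c' ∈ (univ : Finset (Fin (q+1))).filter (fun c' => c' ≠ 0),
            (if x i = c ∧ x j = c' then F c * G c' else 0) := by
    intro x _
    rw [← single_sum F hF0 (x i), ← single_sum G hG0 (x j), Finset.sum_mul_sum]
    apply Finset.sum_congr rfl; intro c _
    apply Finset.sum_congr rfl; intro c' _
    by_cases h1 : x i = c <;> by_cases h2 : x j = c' <;> simp [h1, h2]
  rw [Finset.sum_congr rfl expand, Finset.sum_comm]
  apply Finset.sum_congr rfl
  intro c _
  rw [Finset.sum_comm]
  apply Finset.sum_congr rfl
  intro c' _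
  rw [Finset.sum_ite, Finset.sum_const, Finset.sum_const_zero, add_zero, nsmul_eq_mul]

lemma sum_eq_zero_case {d : ℕ} (a : Fin d → ℕ) (h : ∑ i, a i = 0) : ∀ j, a j = 0 := by
  intro j
  exact Finset.sum_eq_zero_iff.mp h j (mem_univ j)

lemma sum_eq_one_case {d : ℕ} (a : Fin d → ℕ) (h : ∑ i, a i = 1) :
    ∃ i, ∀ j, a j = if j = i then 1 else 0 := by
  obtain ⟨i, _, hi⟩ := Finset.exists_ne_zero_of_sum_ne_zero (h ▸ one_ne_zero)
  have hle : a i ≤ 1 := h ▸ Finset.single_le_sum (fun _ _ => Nat.zero_le _) (mem_univ i)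
  have hsplit := Finset.add_sum_erase univ a (mem_univ i)
  refine ⟨i, fun j => ?_⟩
  by_cases hj : j = i
  · simp only [hj, if_pos]
    omega
  · rw [if_neg hj]
    refine Finset.sum_eq_zero_iff.mp ?_ j (Finset.mem_erase.mpr ⟨hj, mem_univ j⟩)
    omega
lemma sum_eq_two_case {d : ℕ} (a : Fin d → ℕ) (h : ∑ i, a i = 2) :
    (∃ i, ∀ j, a j = if j = i then 2 else 0) ∨
    (∃ i i', i ≠ i' ∧ ∀ j, a j = (if j = i then 1 else 0) + (if j = i' then 1 else 0)) := by
  obtain ⟨i, _, hi⟩ := Finset.exists_ne_zero_of_sum_ne_zero (h ▸ two_ne_zero)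
  have hle : a i ≤ 2 := h ▸ Finset.single_le_sum (fun _ _ => Nat.zero_le _) (mem_univ i)
  have hsplit := Finset.add_sum_erase univ a (mem_univ i)
  rcases (by omega : a i = 2 ∨ a i = 1) with h2 | h1
  · left
    refine ⟨i, fun j => ?_⟩
    by_cases hj : j = i
    · simp only [hj, if_pos]; omega
    · rw [if_neg hj]
      refine Finset.sum_eq_zero_iff.mp ?_ j (Finset.mem_erase.mpr ⟨hj, mem_univ j⟩)
      omega
  · right
    have herase : ∑ j ∈ univ.erase i, a j = 1 := by omega
    obtain ⟨i', hi'mem, hi'⟩ := Finset.exists_ne_zero_of_sum_ne_zero (herase ▸ one_ne_zero)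
    have hii' : i' ≠ i := (Finset.mem_erase.mp hi'mem).1
    have hle' : a i' ≤ 1 := herase ▸
      Finset.single_le_sum (fun _ _ => Nat.zero_le _) hi'mem
    have hsplit2 := Finset.add_sum_erase (univ.erase i) a hi'mem
    refine ⟨i, i', hii'.symm, fun j => ?_⟩
    by_cases hj : j = i
    · rw [hj, if_pos rfl, if_neg (Ne.symm hii'), h1]
    · by_cases hj' : j = i'
      · rw [hj', if_neg (by exact fun hh => hii' hh), if_pos rfl]
        omega
      · rw [if_neg hj, if_neg hj']
        refine Finset.sum_eq_zero_iff.mp ?_ j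
          (Finset.mem_erase.mpr ⟨hj', Finset.mem_erase.mpr ⟨hj, mem_univ j⟩⟩)
        omega

lemma prod_pow_single {d : ℕ} (z : Fin d → ℂ) (i : Fin d) (n : ℕ) (a : Fin d → ℕ)
    (ha : ∀ j, a j = if j = i then n else 0) :
    ∏ j, (z j) ^ (a j) = z i ^ n := by
  rw [Finset.prod_eq_single i]
  · rw [ha i, if_pos rfl]
  · intro b _ hb
    rw [ha b, if_neg hb, pow_zero]
  · intro h; exact absurd (mem_univ i) h

lemma prod_pow_pair {d : ℕ} (z : Fin d → ℂ) (i i' : Fin d) (a : Fin d → ℕ)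
    (ha : ∀ j, a j = (if j = i then 1 else 0) + (if j = i' then 1 else 0)) :
    ∏ j, (z j) ^ (a j) = z i * z i' := by
  have : ∀ j, (z j) ^ (a j)
      = (z j) ^ (if j = i then 1 else 0) * (z j) ^ (if j = i' then 1 else 0) := by
    intro j; rw [ha j, pow_add]
  rw [Finset.prod_congr rfl (fun j _ => this j), Finset.prod_mul_distrib,
    prod_pow_single z i 1 _ (fun j => rfl), prod_pow_single z i' 1 _ (fun j => rfl),
    pow_one, pow_one]
lemma case_single {d q lam1 : ℕ} (X : Finset (Fin d → Fin (q+1))) (i : Fin d)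
    (F : Fin (q+1) → ℂ) (hF0 : F 0 = 0)
    (hN : ∀ c : Fin (q+1), c ≠ 0 → (X.filter fun x => x i = c).card = lam1)
    (hFsum : ∑ c ∈ (univ : Finset (Fin (q+1))).filter (fun c => c ≠ 0), F c = 0) :
    ∑ x ∈ X, F (x i) = 0 := by
  rw [group_single X i F hF0,
    Finset.sum_congr rfl (fun c hc => by
      rw [hN c (by simpa using hc)]),
    ← Finset.mul_sum, hFsum, mul_zero]

lemma case_double {d q lam2 : ℕ} (X : Finset (Fin d → Fin (q+1))) (i j : Fin d)
    (F G : Fin (q+1) → ℂ) (hF0 : F 0 = 0) (hG0 : G 0 = 0)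
    (hN : ∀ c c' : Fin (q+1), c ≠ 0 → c' ≠ 0 →
      (X.filter fun x => x i = c ∧ x j = c').card = lam2)
    (hFG : (∑ c ∈ (univ : Finset (Fin (q+1))).filter (fun c => c ≠ 0), F c)
        * (∑ c ∈ (univ : Finset (Fin (q+1))).filter (fun c => c ≠ 0), G c) = 0) :
    ∑ x ∈ X, F (x i) * G (x j) = 0 := by
  rw [group_double X i j F G hF0 hG0,
    Finset.sum_congr rfl (fun c hc => Finset.sum_congr rfl (fun c' hc' => by
      rw [hN c c' (by simpa using hc) (by simpa using hc')])),
    Finset.sum_congr rfl (fun c hc => (Finset.mul_sum _ _ _).symm),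
    ← Finset.mul_sum, ← Finset.sum_mul_sum, hFG, mul_zero]

lemma case_diag {d q lam1 : ℕ} (X : Finset (Fin d → Fin (q+1))) (i : Fin d) (v : ℂ)
    (hN : ∀ c : Fin (q+1), c ≠ 0 → (X.filter fun x => x i = c).card = lam1) :
    ∑ x ∈ X, (if x i = 0 then 0 else v) = (q : ℂ) * (lam1 : ℂ) * v := by
  rw [show (fun x : Fin d → Fin (q+1) => if x i = 0 then (0:ℂ) else v)
      = fun x => (fun c : Fin (q+1) => if c = 0 then (0:ℂ) else v) (x i) from rfl]
  rw [group_single X i (fun c => if c = 0 then (0:ℂ) else v) (if_pos rfl),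
    Finset.sum_congr rfl (fun c hc => by
      rw [hN c (by simpa using hc), if_neg (by simpa using hc)]),
    Finset.sum_const, card_ne_zero_fin, nsmul_eq_mul]
  ring

lemma pow_val_inj {q : ℕ} {ω : ℂ} (hω : IsPrimitiveRoot ω q) {n m : ℕ}
    (hn1 : 1 ≤ n) (hnq : n ≤ q) (hm1 : 1 ≤ m) (hmq : m ≤ q) (h : ω ^ n = ω ^ m) : n = m := by
  rcases Nat.lt_or_ge n q with h1 | h1
  · rcases Nat.lt_or_ge m q with h2 | h2
    · exact hω.pow_inj h1 h2 h
    · have hm : m = q := by omega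
      rw [hm, hω.pow_eq_one] at h
      have hdvd := hω.dvd_of_pow_eq_one n h
      have := Nat.le_of_dvd (by omega) hdvd
      omega
  · rcases Nat.lt_or_ge m q with h2 | h2
    · have hn : n = q := by omega
      rw [hn, hω.pow_eq_one] at h
      have hdvd := hω.dvd_of_pow_eq_one m h.symm
      have := Nat.le_of_dvd (by omega) hdvd
      omega
    · omega

/-- The map `ψ` sending a word over `{0,1,…,q}` to a unit vector in `ℂ^d`:
`ψ(x)_k = ω^{x_k}/√r` if `x_k ≠ 0` and `0` otherwise. -/
noncomputable def psiMap (d q r : ℕ) (ω : ℂ) (x : Fin d → Fin (q + 1)) : Fin d → ℂ :=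
  fun k => if x k = 0 then 0 else ω ^ ((x k : ℕ)) / (Real.sqrt r : ℂ)

/-- a nonbinary block `t`-design `X` of words of rank `r` over
`{0,…,q}` (`q ≥ 3`, `2 ≤ t ≤ r ≤ d`) maps under `ψ` injectively into `Ω(d)`,
and `ψ(X)` is a complex spherical `{(k,l) : k+l ≤ 2}`-design. -/
theorem stmt_19 {d q : ℕ} (hq : 3 ≤ q) (hd : 1 ≤ d) (t r : ℕ)
    (ht : 2 ≤ t) (htr : t ≤ r) (hrd : r ≤ d)
    (ω : ℂ) (hω : IsPrimitiveRoot ω q)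
    (X : Finset (Fin d → Fin (q + 1))) (hXne : X.Nonempty)
    (hrank : ∀ x ∈ X, (Finset.univ.filter fun i => x i ≠ 0).card = r)
    (lam : ℕ)
    (hblock : ∀ y : Fin d → Fin (q + 1),
      (Finset.univ.filter fun i => y i ≠ 0).card = t →
      (X.filter fun x => ∀ i, y i = 0 ∨ y i = x i).card = lam) :
    Set.InjOn (psiMap d q r ω) ↑X ∧
    (∀ x ∈ X, cInner (psiMap d q r ω x) (psiMap d q r ω x) = 1) ∧
    IsDesign d (X.image (psiMap d q r ω))
      (((Finset.range 3) ×ˢ (Finset.range 3)).filter fun p => p.1 + p.2 ≤ 2) := by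
  have hq1 : 1 < q := by omega
  have hq0 : q ≠ 0 := by omega
  have hr2 : 2 ≤ r := le_trans ht htr
  have hd2 : 2 ≤ d := le_trans hr2 hrd
  have hrposR : (0:ℝ) < (r:ℝ) := by exact_mod_cast (by omega : 0 < r)
  have hsqne : ((Real.sqrt r : ℝ) : ℂ) ≠ 0 :=
    Complex.ofReal_ne_zero.mpr (Real.sqrt_ne_zero'.mpr hrposR)
  have h1t : 1 ≤ t := by omega
  have hrC : (r:ℂ) ≠ 0 := Nat.cast_ne_zero.mpr (by omega)
  have hdC : (d:ℂ) ≠ 0 := Nat.cast_ne_zero.mpr (by omega)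
  have hsqmul : ((Real.sqrt r : ℝ) : ℂ) * ((Real.sqrt r : ℝ) : ℂ) = (r : ℂ) := by
    rw [← Complex.ofReal_mul, Real.mul_self_sqrt (by positivity)]
    simp
  have hωq : ω ^ q = 1 := hω.pow_eq_one
  have hω1 : ω ≠ 1 := hω.ne_one hq1
  have hωne : ω ≠ 0 := hω.ne_zero hq0
  have hω2 : ω ^ 2 ≠ 1 := by
    intro h
    have := Nat.le_of_dvd (by omega) (hω.dvd_of_pow_eq_one 2 h)
    omega
  have hω2q : (ω ^ 2) ^ q = 1 := by rw [← pow_mul, mul_comm, pow_mul, hωq, one_pow]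
  set ω' := (starRingEnd ℂ) ω with hω'def
  have hω'q : ω' ^ q = 1 := by rw [hω'def, ← map_pow, hωq, map_one]
  have hω'1 : ω' ≠ 1 := by
    intro h
    apply hω1
    have := congrArg (starRingEnd ℂ) h
    rwa [hω'def, Complex.conj_conj, map_one] at this
  have hω'2 : ω' ^ 2 ≠ 1 := by
    intro h
    rw [hω'def, ← map_pow] at h
    apply hω2
    have := congrArg (starRingEnd ℂ) h
    rwa [Complex.conj_conj, map_one] at this
  have hω'2q : (ω' ^ 2) ^ q = 1 := by rw [← pow_mul, mul_comm, pow_mul, hω'q, one_pow]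
  have hnsq : Complex.normSq ω = 1 := by
    rw [Complex.normSq_eq_norm_sq,
      Complex.norm_eq_one_of_pow_eq_one hωq hq0, one_pow]
  have hmc : ω * ω' = 1 := by
    rw [hω'def, Complex.mul_conj, hnsq, Complex.ofReal_one]
  have hvle : ∀ c : Fin (q+1), (c : ℕ) ≤ q := fun c => Fin.is_le c
  have hvge : ∀ c : Fin (q+1), c ≠ 0 → 1 ≤ (c : ℕ) := by
    intro c hc
    by_contra hlt
    push_neg at hlt
    apply hc
    have hcv : (c : ℕ) = 0 := by omega
    exact Fin.ext (by simpa using hcv)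
  have hconjpsi : ∀ (x : Fin d → Fin (q+1)) (m : Fin d),
      (starRingEnd ℂ) (psiMap d q r ω x m)
        = if x m = 0 then 0 else ω' ^ (x m : ℕ) / (Real.sqrt r : ℂ) := by
    intro x m
    by_cases h : x m = 0
    · simp [psiMap, h]
    · simp only [psiMap, if_neg h]
      rw [map_div₀, map_pow, Complex.conj_ofReal, hω'def]
  have hdiag : ∀ (x : Fin d → Fin (q+1)) (m : Fin d),
      psiMap d q r ω x m * (starRingEnd ℂ) (psiMap d q r ω x m)
        = if x m = 0 then 0 else ((r : ℂ))⁻¹ := by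
    intro x m
    rw [hconjpsi]
    by_cases h : x m = 0
    · simp [psiMap, h]
    · rw [if_neg h, if_neg h]
      simp only [psiMap, if_neg h]
      rw [div_mul_div_comm, ← mul_pow, hmc, one_pow, hsqmul, one_div]
  -- injectivity
  have hinj : Set.InjOn (psiMap d q r ω) ↑X := by
    intro x hx y hy hxy
    funext i
    have hi := congrFun hxy i
    simp only [psiMap] at hi
    by_cases h0 : x i = 0
    · by_cases h0' : y i = 0
      · rw [h0, h0']
      · rw [if_pos h0, if_neg h0'] at hi
        exfalso
        rcases div_eq_zero_iff.mp hi.symm with h | h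
        · exact pow_ne_zero _ hωne h
        · exact hsqne h
    · by_cases h0' : y i = 0
      · rw [if_neg h0, if_pos h0'] at hi
        exfalso
        rcases div_eq_zero_iff.mp hi with h | h
        · exact pow_ne_zero _ hωne h
        · exact hsqne h
      · rw [if_neg h0, if_neg h0'] at hi
        have hpow : ω ^ (x i : ℕ) = ω ^ (y i : ℕ) := by
          field_simp at hi
          exact hi
        exact Fin.val_injective
          (pow_val_inj hω (hvge _ h0) (hvle _) (hvge _ h0') (hvle _) hpow)
  -- unit norm
  have hunit : ∀ x ∈ X, cInner (psiMap d q r ω x) (psiMap d q r ω x) = 1 := by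
    intro x hx
    unfold cInner
    rw [Finset.sum_congr rfl (fun m _ => by rw [mul_comm, hdiag x m]),
      Finset.sum_ite, Finset.sum_const_zero, Finset.sum_const, zero_add, nsmul_eq_mul]
    have hcard : (Finset.univ.filter fun m => ¬ x m = 0).card = r := hrank x hx
    rw [hcard]
    exact mul_inv_cancel₀ (Nat.cast_ne_zero.mpr (by omega))
  -- counting setup
  set i0 : Fin d := ⟨0, by omega⟩ with hi0
  set j0 : Fin d := ⟨1, by omega⟩ with hj0
  have hi0j0 : i0 ≠ j0 := by
    simp only [hi0, hj0, ne_eq, Fin.mk.injEq]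
    omega
  set c1 : Fin (q+1) := ⟨1, by omega⟩ with hc1def
  have hc1 : c1 ≠ 0 := by
    simp only [hc1def, ne_eq, Fin.ext_iff, Fin.val_zero]
    omega
  have hranksingle : ∀ (i : Fin d) (c : Fin (q+1)), c ≠ 0 →
      (Finset.univ.filter fun j => (if j = i then c else 0) ≠ 0).card = 1 := by
    intro i c hc
    have heq : (Finset.univ.filter fun j => (if j = i then c else 0) ≠ 0) = {i} := by
      ext j
      simp only [Finset.mem_filter, Finset.mem_univ, true_and, Finset.mem_singleton]
      by_cases hj : j = i
      · simp [hj, hc]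
      · simp [hj]
    rw [heq, Finset.card_singleton]
  have hrankpair : ∀ (i j : Fin d) (c c' : Fin (q+1)), i ≠ j → c ≠ 0 → c' ≠ 0 →
      (Finset.univ.filter fun k =>
        (if k = i then c else if k = j then c' else 0) ≠ 0).card = 2 := by
    intro i j c c' hij hc hc'
    have heq : (Finset.univ.filter fun k =>
        (if k = i then c else if k = j then c' else 0) ≠ 0) = {i, j} := by
      ext k
      simp only [Finset.mem_filter, Finset.mem_univ, true_and, Finset.mem_insert,
        Finset.mem_singleton]
      by_cases hk : k = i
      · simp [hk, hc]
      · by_cases hk' : k = j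
        · simp [hk, hk', hc', Ne.symm hij]
        · simp [hk, hk']
    rw [heq, Finset.card_pair hij]
  have hprecsingle : ∀ (i : Fin d) (c : Fin (q+1)), c ≠ 0 →
      (X.filter fun x => ∀ jj, (if jj = i then c else 0) = 0 ∨ (if jj = i then c else 0) = x jj)
        = (X.filter fun x => x i = c) := by
    intro i c hc
    apply Finset.filter_congr
    intro x _
    constructor
    · intro h
      have hh := h i
      rw [if_pos rfl] at hh
      rcases hh with h' | h'
      · exact absurd h' hc
      · exact h'.symm
    · intro h jj
      by_cases hj : jj = i
      · subst hj
        rw [if_pos rfl]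
        exact Or.inr h.symm
      · rw [if_neg hj]
        exact Or.inl rfl
  have hprecpair : ∀ (i j : Fin d) (c c' : Fin (q+1)), i ≠ j → c ≠ 0 → c' ≠ 0 →
      (X.filter fun x => ∀ kk, (if kk = i then c else if kk = j then c' else 0) = 0
          ∨ (if kk = i then c else if kk = j then c' else 0) = x kk)
        = (X.filter fun x => x i = c ∧ x j = c') := by
    intro i j c c' hij hc hc'
    apply Finset.filter_congr
    intro x _
    constructor
    · intro h
      constructor
      · have hh := h i
        rw [if_pos rfl] at hh
        rcases hh with h' | h'
        · exact absurd h' hc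
        · exact h'.symm
      · have hh := h j
        rw [if_neg (Ne.symm hij), if_pos rfl] at hh
        rcases hh with h' | h'
        · exact absurd h' hc'
        · exact h'.symm
    · rintro ⟨h1, h2⟩ kk
      by_cases hk : kk = i
      · subst hk
        rw [if_pos rfl]
        exact Or.inr h1.symm
      · by_cases hk' : kk = j
        · subst hk'
          rw [if_neg hk, if_pos rfl]
          exact Or.inr h2.symm
        · rw [if_neg hk, if_neg hk']
          exact Or.inl rfl
  set lam1 := (X.filter fun x => x i0 = c1).card with hlam1
  set lam2 := (X.filter fun x => x i0 = c1 ∧ x j0 = c1).card with hlam2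
  have hN1 : ∀ (i : Fin d) (c : Fin (q+1)), c ≠ 0 →
      (X.filter fun x => x i = c).card = lam1 := by
    intro i c hc
    rw [hlam1, ← hprecsingle i c hc, ← hprecsingle i0 c1 hc1]
    exact @N_const d q t r lam 1 X hrank hblock h1t htr _ _ (hranksingle i c hc)
      (hranksingle i0 c1 hc1)
  have hN2 : ∀ (i j : Fin d) (c c' : Fin (q+1)), i ≠ j → c ≠ 0 → c' ≠ 0 →
      (X.filter fun x => x i = c ∧ x j = c').card = lam2 := by
    intro i j c c' hij hc hc'
    rw [hlam2, ← hprecpair i j c c' hij hc hc', ← hprecpair i0 j0 c1 c1 hi0j0 hc1 hc1]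
    exact @N_const d q t r lam 2 X hrank hblock ht htr _ _ (hrankpair i j c c' hij hc hc')
      (hrankpair i0 j0 c1 c1 hi0j0 hc1 hc1)
  -- the counting identity
  have hinner1 : ∀ i : Fin d,
      ∑ c ∈ (Finset.univ : Finset (Fin (q+1))).filter (fun c => c ≠ 0),
        (X.filter fun x => x i = c).card = (X.filter fun x => x i ≠ 0).card := by
    intro i
    simp only [Finset.card_filter]
    rw [Finset.sum_comm]
    apply Finset.sum_congr rfl
    intro x _
    rw [Finset.sum_ite_eq]
    by_cases hx0 : x i = 0 <;> simp [hx0]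
  have hsum2 : ∑ i : Fin d, (X.filter fun x => x i ≠ 0).card = X.card * r := by
    simp only [Finset.card_filter]
    rw [Finset.sum_comm]
    have hrow : ∀ x ∈ X, (∑ i : Fin d, if x i ≠ 0 then 1 else 0) = r := by
      intro x hx
      rw [← Finset.card_filter]
      exact hrank x hx
    rw [Finset.sum_congr rfl hrow, Finset.sum_const, smul_eq_mul]
  have hkey : d * (q * lam1) = X.card * r := by
    have h1 : ∑ i : Fin d, ∑ c ∈ (Finset.univ : Finset (Fin (q+1))).filter (fun c => c ≠ 0),
        (X.filter fun x => x i = c).card = d * (q * lam1) := by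
      have hin : ∀ i : Fin d,
          ∑ c ∈ (Finset.univ : Finset (Fin (q+1))).filter (fun c => c ≠ 0),
            (X.filter fun x => x i = c).card = q * lam1 := by
        intro i
        rw [Finset.sum_congr rfl (fun c hc => hN1 i c (by simpa using hc)),
          Finset.sum_const, card_ne_zero_fin, smul_eq_mul]
      rw [Finset.sum_congr rfl (fun i _ => hin i), Finset.sum_const, smul_eq_mul,
        Finset.card_univ, Fintype.card_fin]
    rw [← h1, Finset.sum_congr rfl (fun i _ => hinner1 i), hsum2]
  -- zero sums
  have ZF1 : ∑ c ∈ (Finset.univ : Finset (Fin (q+1))).filter (fun c => c ≠ 0),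
      (if c = 0 then (0:ℂ) else ω ^ (c : ℕ) / (Real.sqrt r : ℂ)) = 0 := by
    rw [Finset.sum_congr rfl (fun c hc => if_neg (by simpa using hc)),
      ← Finset.sum_div, sum_fin_pow ω hω1 hωq, zero_div]
  have ZG1 : ∑ c ∈ (Finset.univ : Finset (Fin (q+1))).filter (fun c => c ≠ 0),
      (if c = 0 then (0:ℂ) else ω' ^ (c : ℕ) / (Real.sqrt r : ℂ)) = 0 := by
    rw [Finset.sum_congr rfl (fun c hc => if_neg (by simpa using hc)),
      ← Finset.sum_div, sum_fin_pow ω' hω'1 hω'q, zero_div]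
  have ZF2 : ∑ c ∈ (Finset.univ : Finset (Fin (q+1))).filter (fun c => c ≠ 0),
      (if c = 0 then (0:ℂ) else ω ^ (c : ℕ) / (Real.sqrt r : ℂ)) ^ 2 = 0 := by
    rw [Finset.sum_congr rfl (fun c hc => by
      rw [if_neg (by simpa using hc), div_pow, ← pow_mul, mul_comm (c : ℕ) 2, pow_mul]),
      ← Finset.sum_div, sum_fin_pow (ω ^ 2) hω2 hω2q, zero_div]
  have ZG2 : ∑ c ∈ (Finset.univ : Finset (Fin (q+1))).filter (fun c => c ≠ 0),
      (if c = 0 then (0:ℂ) else ω' ^ (c : ℕ) / (Real.sqrt r : ℂ)) ^ 2 = 0 := by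
    rw [Finset.sum_congr rfl (fun c hc => by
      rw [if_neg (by simpa using hc), div_pow, ← pow_mul, mul_comm (c : ℕ) 2, pow_mul]),
      ← Finset.sum_div, sum_fin_pow (ω' ^ 2) hω'2 hω'2q, zero_div]
  refine ⟨hinj, hunit, ?_⟩
  intro kl hkl a b ha hb
  obtain ⟨k, l⟩ := kl
  simp only [Finset.mem_filter, Finset.mem_product, Finset.mem_range] at hkl
  obtain ⟨⟨hk3, hl3⟩, hkl2⟩ := hkl
  simp only at ha hb
  rw [Finset.sum_image (fun x hx y hy h => hinj hx hy h),
    Finset.card_image_of_injOn hinj]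
  have hfac : (Nat.factorial (d-1) : ℂ) ≠ 0 := Nat.cast_ne_zero.mpr (Nat.factorial_ne_zero _)
  interval_cases k <;> interval_cases l <;> try (exfalso; revert hkl2; decide)
  · -- (0,0)
    have ha0 := sum_eq_zero_case a ha
    have hb0 := sum_eq_zero_case b hb
    have hab : a = b := funext (fun j => by rw [ha0 j, hb0 j])
    have hterm : ∀ x ∈ X, (∏ i, psiMap d q r ω x i ^ a i)
        * ∏ i, (starRingEnd ℂ) (psiMap d q r ω x i) ^ b i = 1 := by
      intro x _
      have h1 : (∏ i, psiMap d q r ω x i ^ a i) = 1 :=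
        Finset.prod_eq_one (fun j _ => by rw [ha0 j, pow_zero])
      have h2 : (∏ i, (starRingEnd ℂ) (psiMap d q r ω x i) ^ b i) = 1 :=
        Finset.prod_eq_one (fun j _ => by rw [hb0 j, pow_zero])
      rw [h1, h2, mul_one]
    rw [Finset.sum_congr rfl hterm, Finset.sum_const, nsmul_eq_mul, mul_one]
    have havg : monomialAvg d a b = 1 := by
      unfold monomialAvg
      rw [if_pos hab]
      simp only [ha0, Nat.factorial_zero, Nat.cast_one, Finset.prod_const_one, mul_one,
        Finset.sum_const_zero, add_zero]
      exact div_self hfac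
    rw [havg, mul_one]
  · -- (0,1)
    have ha0 := sum_eq_zero_case a ha
    obtain ⟨i, hbi⟩ := sum_eq_one_case b hb
    have hab : ¬ a = b := by
      intro h
      have hh := congrFun h i
      rw [ha0 i, hbi i, if_pos rfl] at hh
      exact one_ne_zero hh.symm
    have hterm : ∀ x ∈ X, (∏ m, psiMap d q r ω x m ^ a m)
        * ∏ m, (starRingEnd ℂ) (psiMap d q r ω x m) ^ b m
        = if x i = 0 then 0 else ω' ^ (x i : ℕ) / (Real.sqrt r : ℂ) := by
      intro x _
      have h1 : (∏ m, psiMap d q r ω x m ^ a m) = 1 :=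
        Finset.prod_eq_one (fun j _ => by rw [ha0 j, pow_zero])
      rw [h1, one_mul,
        prod_pow_single (fun m => (starRingEnd ℂ) (psiMap d q r ω x m)) i 1 b hbi,
        pow_one, hconjpsi]
    rw [Finset.sum_congr rfl hterm]
    have hz : ∑ x ∈ X, (if x i = 0 then (0:ℂ) else ω' ^ (x i : ℕ) / (Real.sqrt r : ℂ)) = 0 :=
      case_single X i (fun c : Fin (q+1) => if c = 0 then (0:ℂ) else ω' ^ (c : ℕ) / (Real.sqrt r : ℂ)) (if_pos rfl) (hN1 i) ZG1
    rw [hz]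
    unfold monomialAvg
    rw [if_neg hab, mul_zero]
  · -- (0,2)
    have ha0 := sum_eq_zero_case a ha
    have hone : ∀ x ∈ X, (∏ m, psiMap d q r ω x m ^ a m) = 1 := by
      intro x _
      exact Finset.prod_eq_one (fun j _ => by rw [ha0 j, pow_zero])
    rcases sum_eq_two_case b hb with ⟨i, hbi⟩ | ⟨i, i', hii', hbi⟩
    · have hab : ¬ a = b := by
        intro h
        have hh := congrFun h i
        rw [ha0 i, hbi i, if_pos rfl] at hh
        exact (by norm_num : (0:ℕ) ≠ 2) hh
      have hterm : ∀ x ∈ X, (∏ m, psiMap d q r ω x m ^ a m)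
          * ∏ m, (starRingEnd ℂ) (psiMap d q r ω x m) ^ b m
          = (if x i = 0 then (0:ℂ) else ω' ^ (x i : ℕ) / (Real.sqrt r : ℂ)) ^ 2 := by
        intro x hx
        rw [hone x hx, one_mul,
          prod_pow_single (fun m => (starRingEnd ℂ) (psiMap d q r ω x m)) i 2 b hbi,
          hconjpsi]
      rw [Finset.sum_congr rfl hterm]
      have hz : ∑ x ∈ X, (if x i = 0 then (0:ℂ) else ω' ^ (x i : ℕ) / (Real.sqrt r : ℂ)) ^ 2 = 0 :=
        case_single X i (fun c : Fin (q+1) => (if c = 0 then (0:ℂ) else ω' ^ (c : ℕ) / (Real.sqrt r : ℂ)) ^ 2) (by norm_num) (hN1 i) ZG2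
      rw [hz]
      unfold monomialAvg
      rw [if_neg hab, mul_zero]
    · have hab : ¬ a = b := by
        intro h
        have hh := congrFun h i
        rw [ha0 i, hbi i, if_pos rfl, if_neg hii'] at hh
        exact one_ne_zero hh.symm
      have hterm : ∀ x ∈ X, (∏ m, psiMap d q r ω x m ^ a m)
          * ∏ m, (starRingEnd ℂ) (psiMap d q r ω x m) ^ b m
          = (if x i = 0 then (0:ℂ) else ω' ^ (x i : ℕ) / (Real.sqrt r : ℂ))
            * (if x i' = 0 then (0:ℂ) else ω' ^ (x i' : ℕ) / (Real.sqrt r : ℂ)) := by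
        intro x hx
        rw [hone x hx, one_mul,
          prod_pow_pair (fun m => (starRingEnd ℂ) (psiMap d q r ω x m)) i i' b hbi,
          hconjpsi, hconjpsi]
      rw [Finset.sum_congr rfl hterm]
      have hz : ∑ x ∈ X, (if x i = 0 then (0:ℂ) else ω' ^ (x i : ℕ) / (Real.sqrt r : ℂ))
          * (if x i' = 0 then (0:ℂ) else ω' ^ (x i' : ℕ) / (Real.sqrt r : ℂ)) = 0 :=
        case_double X i i' (fun c : Fin (q+1) => if c = 0 then (0:ℂ) else ω' ^ (c : ℕ) / (Real.sqrt r : ℂ)) (fun c : Fin (q+1) => if c = 0 then (0:ℂ) else ω' ^ (c : ℕ) / (Real.sqrt r : ℂ)) (if_pos rfl) (if_pos rfl)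
          (fun c c' hc hc' => hN2 i i' c c' hii' hc hc') (by rw [ZG1, zero_mul])
      rw [hz]
      unfold monomialAvg
      rw [if_neg hab, mul_zero]
  · -- (1,0)
    obtain ⟨i, hai⟩ := sum_eq_one_case a ha
    have hb0 := sum_eq_zero_case b hb
    have hab : ¬ a = b := by
      intro h
      have hh := congrFun h i
      rw [hai i, if_pos rfl, hb0 i] at hh
      exact one_ne_zero hh
    have hterm : ∀ x ∈ X, (∏ m, psiMap d q r ω x m ^ a m)
        * ∏ m, (starRingEnd ℂ) (psiMap d q r ω x m) ^ b m
        = if x i = 0 then 0 else ω ^ (x i : ℕ) / (Real.sqrt r : ℂ) := by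
      intro x _
      have h2 : (∏ m, (starRingEnd ℂ) (psiMap d q r ω x m) ^ b m) = 1 :=
        Finset.prod_eq_one (fun j _ => by rw [hb0 j, pow_zero])
      rw [h2, mul_one, prod_pow_single (fun m => psiMap d q r ω x m) i 1 a hai, pow_one]
      rfl
    rw [Finset.sum_congr rfl hterm]
    have hz : ∑ x ∈ X, (if x i = 0 then (0:ℂ) else ω ^ (x i : ℕ) / (Real.sqrt r : ℂ)) = 0 :=
      case_single X i (fun c : Fin (q+1) => if c = 0 then (0:ℂ) else ω ^ (c : ℕ) / (Real.sqrt r : ℂ)) (if_pos rfl) (hN1 i) ZF1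
    rw [hz]
    unfold monomialAvg
    rw [if_neg hab, mul_zero]
  · -- (1,1)
    obtain ⟨i, hai⟩ := sum_eq_one_case a ha
    obtain ⟨j, hbj⟩ := sum_eq_one_case b hb
    have hterm : ∀ x ∈ X, (∏ m, psiMap d q r ω x m ^ a m)
        * ∏ m, (starRingEnd ℂ) (psiMap d q r ω x m) ^ b m
        = psiMap d q r ω x i * (starRingEnd ℂ) (psiMap d q r ω x j) := by
      intro x _
      rw [prod_pow_single (fun m => psiMap d q r ω x m) i 1 a hai,
        prod_pow_single (fun m => (starRingEnd ℂ) (psiMap d q r ω x m)) j 1 b hbj,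
        pow_one, pow_one]
    rw [Finset.sum_congr rfl hterm]
    by_cases hij : i = j
    · subst hij
      have hab : a = b := funext fun m => by rw [hai m, hbj m]
      rw [Finset.sum_congr rfl (fun x _ => hdiag x i), case_diag X i ((r:ℂ))⁻¹ (hN1 i)]
      unfold monomialAvg
      rw [if_pos hab]
      have hprodfac : ∏ m, ((a m).factorial : ℂ) = 1 := by
        apply Finset.prod_eq_one
        intro m _
        rw [hai m]
        by_cases hm : m = i <;> simp [hm]
      rw [hprodfac, ha, mul_one]
      have hdd : d + 1 - 1 = d := Nat.add_sub_cancel d 1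
      rw [hdd]
      have hfacd : (Nat.factorial d : ℂ) = d * Nat.factorial (d-1) := by
        exact_mod_cast (Nat.mul_factorial_pred (by omega : d ≠ 0)).symm
      rw [hfacd]
      have hkeyC : (d:ℂ) * ((q:ℂ) * (lam1:ℂ)) = (X.card : ℂ) * (r:ℂ) := by
        exact_mod_cast hkey
      have hsimp : ((Nat.factorial (d-1) : ℂ)) / ((d:ℂ) * (Nat.factorial (d-1) : ℂ))
          = ((d:ℂ))⁻¹ := by
        rw [mul_comm, ← div_div, div_self hfac, one_div]
      rw [hsimp]
      rw [show (q:ℂ) * (lam1:ℂ) * ((r:ℂ))⁻¹ = ((q:ℂ) * (lam1:ℂ)) / (r:ℂ) from rfl,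
        show (X.card:ℂ) * ((d:ℂ))⁻¹ = (X.card:ℂ) / (d:ℂ) from rfl,
        div_eq_div_iff hrC hdC]
      linear_combination hkeyC
    · have hab : ¬ a = b := by
        intro h
        have hh := congrFun h i
        rw [hai i, if_pos rfl, hbj i, if_neg hij] at hh
        exact one_ne_zero hh
      have hterm2 : ∀ x ∈ X, psiMap d q r ω x i * (starRingEnd ℂ) (psiMap d q r ω x j)
          = (if x i = 0 then (0:ℂ) else ω ^ (x i : ℕ) / (Real.sqrt r : ℂ))
            * (if x j = 0 then (0:ℂ) else ω' ^ (x j : ℕ) / (Real.sqrt r : ℂ)) := by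
        intro x _
        rw [hconjpsi x j]
        rfl
      have hz : ∑ x ∈ X, (if x i = 0 then (0:ℂ) else ω ^ (x i : ℕ) / (Real.sqrt r : ℂ))
          * (if x j = 0 then (0:ℂ) else ω' ^ (x j : ℕ) / (Real.sqrt r : ℂ)) = 0 :=
        case_double X i j (fun c : Fin (q+1) => if c = 0 then (0:ℂ) else ω ^ (c : ℕ) / (Real.sqrt r : ℂ)) (fun c : Fin (q+1) => if c = 0 then (0:ℂ) else ω' ^ (c : ℕ) / (Real.sqrt r : ℂ)) (if_pos rfl) (if_pos rfl)
          (fun c c' hc hc' => hN2 i j c c' hij hc hc') (by rw [ZF1, zero_mul])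
      rw [Finset.sum_congr rfl hterm2, hz]
      unfold monomialAvg
      rw [if_neg hab, mul_zero]
  · -- (2,0)
    have hb0 := sum_eq_zero_case b hb
    have honeb : ∀ x ∈ X, (∏ m, (starRingEnd ℂ) (psiMap d q r ω x m) ^ b m) = 1 := by
      intro x _
      exact Finset.prod_eq_one (fun j _ => by rw [hb0 j, pow_zero])
    rcases sum_eq_two_case a ha with ⟨i, hai⟩ | ⟨i, i', hii', hai⟩
    · have hab : ¬ a = b := by
        intro h
        have hh := congrFun h i
        rw [hai i, if_pos rfl, hb0 i] at hh
        exact (by norm_num : (2:ℕ) ≠ 0) hh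
      have hterm : ∀ x ∈ X, (∏ m, psiMap d q r ω x m ^ a m)
          * ∏ m, (starRingEnd ℂ) (psiMap d q r ω x m) ^ b m
          = (if x i = 0 then (0:ℂ) else ω ^ (x i : ℕ) / (Real.sqrt r : ℂ)) ^ 2 := by
        intro x hx
        rw [honeb x hx, mul_one,
          prod_pow_single (fun m => psiMap d q r ω x m) i 2 a hai]
        rfl
      rw [Finset.sum_congr rfl hterm]
      have hz : ∑ x ∈ X, (if x i = 0 then (0:ℂ) else ω ^ (x i : ℕ) / (Real.sqrt r : ℂ)) ^ 2 = 0 :=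
        case_single X i (fun c : Fin (q+1) => (if c = 0 then (0:ℂ) else ω ^ (c : ℕ) / (Real.sqrt r : ℂ)) ^ 2) (by norm_num) (hN1 i) ZF2
      rw [hz]
      unfold monomialAvg
      rw [if_neg hab, mul_zero]
    · have hab : ¬ a = b := by
        intro h
        have hh := congrFun h i
        rw [hai i, if_pos rfl, if_neg hii', hb0 i] at hh
        exact one_ne_zero hh
      have hterm : ∀ x ∈ X, (∏ m, psiMap d q r ω x m ^ a m)
          * ∏ m, (starRingEnd ℂ) (psiMap d q r ω x m) ^ b m
          = (if x i = 0 then (0:ℂ) else ω ^ (x i : ℕ) / (Real.sqrt r : ℂ))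
            * (if x i' = 0 then (0:ℂ) else ω ^ (x i' : ℕ) / (Real.sqrt r : ℂ)) := by
        intro x hx
        rw [honeb x hx, mul_one,
          prod_pow_pair (fun m => psiMap d q r ω x m) i i' a hai]
        rfl
      rw [Finset.sum_congr rfl hterm]
      have hz : ∑ x ∈ X, (if x i = 0 then (0:ℂ) else ω ^ (x i : ℕ) / (Real.sqrt r : ℂ))
          * (if x i' = 0 then (0:ℂ) else ω ^ (x i' : ℕ) / (Real.sqrt r : ℂ)) = 0 :=
        case_double X i i' (fun c : Fin (q+1) => if c = 0 then (0:ℂ) else ω ^ (c : ℕ) / (Real.sqrt r : ℂ)) (fun c : Fin (q+1) => if c = 0 then (0:ℂ) else ω ^ (c : ℕ) / (Real.sqrt r : ℂ)) (if_pos rfl) (if_pos rfl)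
          (fun c c' hc hc' => hN2 i i' c c' hii' hc hc') (by rw [ZF1, zero_mul])
      rw [hz]
      unfold monomialAvg
      rw [if_neg hab, mul_zero]
end
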